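/- arXiv:1410.4902 — 9 statements merged into one kernel-verified Lean document; each statement's English description precedes it below -/
import Mathlib

section
/- Let G be a finite graph, and let (A, B) be a partition of V(G) maximizing the number |E(A,B)| of edges of G with one endpoint in A and one endpoint in B. Let H be the spanning bipartite subgraph of G whose edge set is exactly the edges between A and B. Then for every subset X ⊆ V(G), the number of edges of H with one endpoint in X and the other in V(G) \ X is at least half the number of edges of G with one endpoint in X and the other in V(G) \ X. -/
/-- The set of edges of `G` with one endpoint in `X` and the other endpoint
outside `X` (i.e. in `V(G) \ X`). -/
def crossEdges {V : Type*} (G : SimpleGraph V) (X : Set V) : Set (Sym2 V) :=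
  {e | e ∈ G.edgeSet ∧ ∃ u v : V, u ∈ X ∧ v ∉ X ∧ e = s(u, v)}

lemma mem_crossEdges {V : Type*} (G : SimpleGraph V) (X : Set V) (u v : V) :
    s(u, v) ∈ crossEdges G X ↔ G.Adj u v ∧ (u ∈ X ↔ v ∉ X) := by
  constructor
  · rintro ⟨he, a, b, ha, hb, heq⟩
    rw [Sym2.eq_iff] at heq
    rw [SimpleGraph.mem_edgeSet] at he
    rcases heq with ⟨rfl, rfl⟩ | ⟨rfl, rfl⟩ <;> exact ⟨he, by tauto⟩
  · rintro ⟨hadj, hiff⟩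
    refine ⟨G.mem_edgeSet.mpr hadj, ?_⟩
    by_cases hu : u ∈ X
    · exact ⟨u, v, hu, hiff.mp hu, rfl⟩
    · exact ⟨v, u, by tauto, hu, Sym2.eq_swap⟩

lemma crossEdges_symmDiff {V : Type*} (G : SimpleGraph V) (A X : Set V) :
    crossEdges G (symmDiff A X) = symmDiff (crossEdges G A) (crossEdges G X) := by
  ext e
  induction e using Sym2.ind with
  | _ u v =>
    rw [Set.mem_symmDiff, mem_crossEdges, mem_crossEdges, mem_crossEdges]
    simp only [Set.mem_symmDiff]
    tauto

/-- Let `G` be a finite graph, and let `(A, Aᶜ)` be a partition of `V(G)` maximizing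
the number `|E(A, Aᶜ)|` of edges of `G` with one endpoint in `A` and one endpoint in `Aᶜ`.
Let `H` be the spanning bipartite subgraph of `G` whose edge set is exactly the edges
between `A` and `Aᶜ`. Then for every subset `X ⊆ V(G)`, the number of edges of `H` with
one endpoint in `X` and the other in `V(G) \ X` is at least half the number of edges of
`G` with one endpoint in `X` and the other in `V(G) \ X`. -/
theorem max_cut_halves_every_cut {V : Type*} [Fintype V] (G : SimpleGraph V) (A : Set V)
    (hmax : ∀ A' : Set V, (crossEdges G A').ncard ≤ (crossEdges G A).ncard)
    (H : SimpleGraph V)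
    (hH : ∀ u v : V, H.Adj u v ↔ G.Adj u v ∧ (u ∈ A ↔ v ∉ A)) :
    ∀ X : Set V, (crossEdges G X).ncard ≤ 2 * (crossEdges H X).ncard := by
  intro X
  set S := crossEdges G A with hS'
  set T := crossEdges G X with hT'
  have hHX : crossEdges H X = T ∩ S := by
    ext e
    induction e using Sym2.ind with
    | _ u v =>
      rw [Set.mem_inter_iff, hS', hT', mem_crossEdges, mem_crossEdges, mem_crossEdges, hH]
      tauto
  have h1 : crossEdges G (symmDiff A X) = (S \ T) ∪ (T \ S) := by
    rw [crossEdges_symmDiff, Set.symmDiff_def]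
  have hcard : (crossEdges G (symmDiff A X)).ncard = (S \ T).ncard + (T \ S).ncard := by
    rw [h1, Set.ncard_union_eq disjoint_sdiff_sdiff (Set.toFinite _) (Set.toFinite _)]
  have hSc : (S ∩ T).ncard + (S \ T).ncard = S.ncard :=
    Set.ncard_inter_add_ncard_diff_eq_ncard S T (Set.toFinite _)
  have hTc : (T ∩ S).ncard + (T \ S).ncard = T.ncard :=
    Set.ncard_inter_add_ncard_diff_eq_ncard T S (Set.toFinite _)
  have hinter : (S ∩ T).ncard = (T ∩ S).ncard := by rw [Set.inter_comm]
  have hmax' := hmax (symmDiff A X)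
  rw [hcard] at hmax'
  rw [hHX]
  omega
end

section
/- Every finite graph G that is (2k−1)-edge-connected contains a spanning bipartite subgraph H that is k-edge-connected. -/
/-- A graph is bipartite if its vertex set can be partitioned into two parts
(a set `A` and its complement) so that every edge has one endpoint in each part. -/
def IsBipartite {V : Type*} (G : SimpleGraph V) : Prop :=
  ∃ A : Set V, ∀ ⦃u v : V⦄, G.Adj u v → (u ∈ A ↔ v ∉ A)

/-- A graph is `ℓ`-edge-connected if it has at least two vertices and, for every nonempty
proper subset `X` of the vertex set, at least `ℓ` edges have one endpoint in `X` and the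
other outside `X`. -/
def IsEdgeConnected {V : Type*} (ℓ : ℕ) (G : SimpleGraph V) : Prop :=
  2 ≤ Nat.card V ∧ ∀ X : Set V, X.Nonempty → X ≠ Set.univ → ℓ ≤ (crossEdges G X).ncard

lemma mem_crossEdges_iff {V : Type*} (G : SimpleGraph V) (X : Set V) (a b : V) :
    s(a, b) ∈ crossEdges G X ↔ G.Adj a b ∧ (a ∈ X ↔ b ∉ X) := by
  constructor
  · rintro ⟨he, u, v, hu, hv, hs⟩
    rw [SimpleGraph.mem_edgeSet] at he
    rw [Sym2.eq_iff] at hs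
    rcases hs with ⟨rfl, rfl⟩ | ⟨rfl, rfl⟩ <;> exact ⟨he, by tauto⟩
  · rintro ⟨he, hx⟩
    refine ⟨he, ?_⟩
    by_cases ha : a ∈ X
    · exact ⟨a, b, ha, hx.mp ha, rfl⟩
    · exact ⟨b, a, by tauto, ha, Sym2.eq_swap⟩

/-- Every finite graph `G` that is `(2k − 1)`-edge-connected contains a spanning
bipartite subgraph `H` that is `k`-edge-connected. -/
theorem spanning_bipartite_edge_connected {V : Type*} [Fintype V] (k : ℕ) (G : SimpleGraph V)
    (h : IsEdgeConnected (2 * k - 1) G) :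
    ∃ H : SimpleGraph V, H ≤ G ∧ IsBipartite H ∧ IsEdgeConnected k H := by
  classical
  obtain ⟨A, hA⟩ := Finite.exists_max (fun A : Set V => (crossEdges G A).ncard)
  set H : SimpleGraph V :=
    { Adj := fun u v => G.Adj u v ∧ (u ∈ A ↔ v ∉ A)
      symm := by
        constructor
        intro u v ⟨hadj, hiff⟩
        exact ⟨hadj.symm, by tauto⟩
      loopless := by
        constructor
        intro u ⟨hadj, _⟩
        exact G.irrefl hadj } with hHdef
  have hH_adj : ∀ a b : V, H.Adj a b ↔ G.Adj a b ∧ (a ∈ A ↔ b ∉ A) := fun a b => Iff.rfl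
  refine ⟨H, ?_, ⟨A, fun u v huv => huv.2⟩, h.1, ?_⟩
  · intro u v huv; exact huv.1
  · intro X hX hXu
    have key := h.2 X hX hXu
    set S := crossEdges G A with hS
    set T := crossEdges G X with hT
    -- cross edges of the symmetric difference
    have hD : crossEdges G (symmDiff A X) = (S \ T) ∪ (T \ S) := by
      ext e
      induction e using Sym2.ind with
      | _ a b =>
        simp only [Set.mem_union, Set.mem_diff, hS, hT, mem_crossEdges_iff,
          Set.mem_symmDiff]
        tauto
    have hHX : crossEdges H X = S ∩ T := by
      ext e
      induction e using Sym2.ind with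
      | _ a b =>
        simp only [Set.mem_inter_iff, hS, hT, mem_crossEdges_iff, hH_adj]
        tauto
    have hfin : ∀ Y : Set (Sym2 V), Y.Finite := fun Y => Set.toFinite Y
    have hDcard : (crossEdges G (symmDiff A X)).ncard = (S \ T).ncard + (T \ S).ncard := by
      rw [hD]
      exact Set.ncard_union_eq disjoint_sdiff_sdiff (hfin _) (hfin _)
    have hScard : (S ∩ T).ncard + (S \ T).ncard = S.ncard :=
      Set.ncard_inter_add_ncard_diff_eq_ncard S T (hfin _)
    have hTcard : (T ∩ S).ncard + (T \ S).ncard = T.ncard :=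
      Set.ncard_inter_add_ncard_diff_eq_ncard T S (hfin _)
    have hTS : (T ∩ S).ncard = (S ∩ T).ncard := by rw [Set.inter_comm]
    have hmax := hA (symmDiff A X)
    rw [hDcard] at hmax
    rw [hHX]
    omega
end

section
/- (Mader) Every finite graph of average degree at least 4ℓ contains an ℓ-connected subgraph. -/
open Set


/-- A graph is `k`-(vertex-)connected if it has more than `k` vertices and remains
connected after the deletion of any set of fewer than `k` vertices. -/
def IsKConnected {V : Type*} (k : ℕ) (G : SimpleGraph V) : Prop :=
  k < Nat.card V ∧ ∀ S : Set V, S.ncard < k → (G.induce Sᶜ).Connected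

namespace MaderAux
variable {V : Type*}

def eSet (G : SimpleGraph V) (A : Set V) : Set (Sym2 V) :=
  {e | e ∈ G.edgeSet ∧ ∀ v ∈ e, v ∈ A}

noncomputable def degIn (G : SimpleGraph V) (A : Set V) (v : V) : ℕ :=
  {w ∈ A | G.Adj v w}.ncard

def induceInduceIso (G : SimpleGraph V) (A : Set V) (T : Set ↥A) :
    (G.induce A).induce T ≃g G.induce (Subtype.val '' T) where
  toFun x := ⟨x.1.1, ⟨x.1, x.2, rfl⟩⟩
  invFun x := ⟨⟨x.1, by obtain ⟨a, _, ha⟩ := x.2; exact ha ▸ a.2⟩, by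
    obtain ⟨a, haT, ha⟩ := x.2
    have : a = ⟨x.1, by exact ha ▸ a.2⟩ := Subtype.ext ha
    exact this ▸ haT⟩
  left_inv x := by ext; rfl
  right_inv x := by ext; rfl
  map_rel_iff' := Iff.rfl

lemma val_image_compl (A : Set V) (S : Set ↥A) :
    Subtype.val '' Sᶜ = A \ (Subtype.val '' S) := by
  ext x
  constructor
  · rintro ⟨a, haS, rfl⟩
    exact ⟨a.2, fun ⟨b, hbS, hb⟩ => haS (by rwa [← Subtype.ext hb.symm] at hbS)⟩
  · rintro ⟨hxA, hxS⟩
    exact ⟨⟨x, hxA⟩, fun h => hxS ⟨⟨x, hxA⟩, h, rfl⟩, rfl⟩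

lemma exists_split (G : SimpleGraph V) (A' : Set V) (hne : A'.Nonempty)
    (hconn : ¬ (G.induce A').Connected) :
    ∃ A₁ A₂ : Set V, A₁ ∪ A₂ = A' ∧ A₁.Nonempty ∧ A₂.Nonempty ∧ Disjoint A₁ A₂ ∧
      ∀ x ∈ A₁, ∀ y ∈ A₂, ¬ G.Adj x y := by
  have hnonempty : Nonempty ↥A' := hne.to_subtype
  rw [SimpleGraph.connected_iff] at hconn
  push_neg at hconn
  have hpre : ¬ (G.induce A').Preconnected := fun h => (hconn h).false hnonempty.some
  rw [SimpleGraph.Preconnected] at hpre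
  push_neg at hpre
  obtain ⟨a, b, hab⟩ := hpre
  refine ⟨Subtype.val '' {u | (G.induce A').Reachable a u},
    A' \ Subtype.val '' {u | (G.induce A').Reachable a u}, ?_,
    ⟨a, a, SimpleGraph.Reachable.refl a, rfl⟩,
    ⟨b, b.2, ?_⟩, disjoint_sdiff_right, ?_⟩
  · apply Set.union_diff_cancel
    rintro x ⟨u, _, rfl⟩; exact u.2
  · rintro ⟨u, hu, hub⟩
    exact hab (by rwa [Subtype.ext hub] at hu)
  · rintro x ⟨u, hu, rfl⟩ y ⟨hyA, hy⟩ hadj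
    exact hy ⟨⟨y, hyA⟩, hu.trans (SimpleGraph.Adj.reachable (by exact hadj)), rfl⟩

lemma eSet_mono (G : SimpleGraph V) {A B : Set V} (h : A ⊆ B) : eSet G A ⊆ eSet G B :=
  fun _ ⟨he, hA⟩ => ⟨he, fun v hv => h (hA v hv)⟩

variable [Fintype V]

lemma eSet_del (G : SimpleGraph V) (A : Set V) (v : V) :
    (eSet G A).ncard ≤ (eSet G (A \ {v})).ncard + degIn G A v := by
  have hsub : eSet G A ⊆ eSet G (A \ {v}) ∪ (fun w => s(v, w)) '' {w ∈ A | G.Adj v w} := by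
    rintro e ⟨he, hA⟩
    by_cases hv : v ∈ e
    · right
      induction e with
      | h x y =>
        rcases Sym2.mem_iff.mp hv with rfl | rfl
        · exact ⟨y, ⟨hA y (Sym2.mem_mk_right _ _), he⟩, rfl⟩
        · exact ⟨x, ⟨hA x (Sym2.mem_mk_left _ _), ((SimpleGraph.mem_edgeSet G).mp he).symm⟩,
            Sym2.eq_swap⟩
    · exact Or.inl ⟨he, fun u hu => ⟨hA u hu, fun h => hv (h ▸ hu)⟩⟩
  calc (eSet G A).ncard ≤ (eSet G (A \ {v}) ∪ (fun w => s(v, w)) '' {w ∈ A | G.Adj v w}).ncard :=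
        Set.ncard_le_ncard hsub (Set.toFinite _)
    _ ≤ (eSet G (A \ {v})).ncard + ((fun w => s(v, w)) '' {w ∈ A | G.Adj v w}).ncard :=
        Set.ncard_union_le _ _
    _ ≤ _ := Nat.add_le_add_left (Set.ncard_image_le (Set.toFinite _)) _

lemma degIn_le (G : SimpleGraph V) (A : Set V) (v : V) (hv : v ∈ A) :
    degIn G A v ≤ A.ncard - 1 := by
  have h : {w ∈ A | G.Adj v w} ⊆ A \ {v} := by
    rintro w ⟨hwA, hadj⟩
    exact ⟨hwA, fun h => G.irrefl (h ▸ hadj)⟩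
  calc degIn G A v ≤ (A \ {v}).ncard := Set.ncard_le_ncard h (Set.toFinite _)
    _ = A.ncard - 1 := Set.ncard_diff_singleton_of_mem hv

lemma eSet_empty (G : SimpleGraph V) : eSet G (∅ : Set V) = ∅ := by
  ext e
  simp only [eSet, Set.mem_setOf_eq, Set.mem_empty_iff_false, iff_false, not_and]
  intro _ h
  induction e with
  | h x y => exact h x (Sym2.mem_mk_left _ _)

lemma eSet_le (G : SimpleGraph V) : ∀ n (A : Set V), A.ncard ≤ n →
    2 * (eSet G A).ncard ≤ A.ncard * (A.ncard - 1) := by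
  intro n
  induction n with
  | zero =>
    intro A hA
    have hA0 : A.ncard = 0 := Nat.le_zero.mp hA
    have : A = ∅ := (Set.ncard_eq_zero (Set.toFinite _)).mp hA0
    subst this
    simp [eSet_empty]
  | succ n ih =>
    intro A hA
    rcases Set.eq_empty_or_nonempty A with rfl | ⟨v, hv⟩
    · simp [eSet_empty]
    · have hpos : 1 ≤ A.ncard := by
        have := (Set.ncard_pos (s := A) (Set.toFinite _)).mpr ⟨v, hv⟩
        omega
      have hdiff : (A \ {v}).ncard = A.ncard - 1 :=
        Set.ncard_diff_singleton_of_mem hv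
      have h1 := ih (A \ {v}) (by omega)
      have h2 := eSet_del G A v
      have h3 := degIn_le G A v hv
      rw [hdiff] at h1
      obtain ⟨b, hb⟩ : ∃ b, A.ncard = b + 1 := ⟨A.ncard - 1, by omega⟩
      rw [hb] at h1 h3 ⊢
      simp only [Nat.add_sub_cancel] at h1 h3 ⊢
      rcases Nat.eq_zero_or_pos b with rfl | hbpos
      · simp only [Nat.zero_sub, Nat.mul_zero, Nat.zero_mul, Nat.le_zero] at h1 ⊢
        omega
      · obtain ⟨c, rfl⟩ : ∃ c, b = c + 1 := ⟨b - 1, by omega⟩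
        simp only [Nat.add_sub_cancel] at h1
        nlinarith

lemma eSet_le' (G : SimpleGraph V) (A : Set V) :
    2 * (eSet G A).ncard ≤ A.ncard * (A.ncard - 1) :=
  eSet_le G A.ncard A le_rfl

lemma mader_aux (G : SimpleGraph V) (k : ℕ) (hk : 1 ≤ k) :
    ∀ n (A : Set V), A.ncard ≤ n → 2 * k - 1 ≤ A.ncard →
      (2 * k - 3) * (A.ncard + 1 - k) + 1 ≤ (eSet G A).ncard →
      ∃ B : Set V, B ⊆ A ∧ IsKConnected k (G.induce B) := by
  intro n
  induction n with
  | zero => intro A h0 h1 _; omega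
  | succ n ih =>
    intro A hAn hAk hAe
    by_cases hdel : ∃ v ∈ A, degIn G A v < 2 * k - 2
    · obtain ⟨v, hvA, hvd⟩ := hdel
      have hk2 : 2 ≤ k := by omega
      have hdiff : (A \ {v}).ncard = A.ncard - 1 :=
        Set.ncard_diff_singleton_of_mem hvA
      have hedel := eSet_del G A v
      by_cases hsz : 2 * k ≤ A.ncard
      · -- delete v and recurse
        have hrec : (2 * k - 3) * ((A \ {v}).ncard + 1 - k) + 1 ≤ (eSet G (A \ {v})).ncard := by
          rw [hdiff]
          obtain ⟨c, hc⟩ : ∃ c, 2 * k - 3 = c := ⟨_, rfl⟩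
          obtain ⟨p, hp⟩ : ∃ p, A.ncard + 1 - k = p := ⟨_, rfl⟩
          obtain ⟨q, hq⟩ : ∃ q, A.ncard - 1 + 1 - k = q := ⟨_, rfl⟩
          have hpq : p = q + 1 := by omega
          have hd : degIn G A v ≤ c := by omega
          rw [hc, hp] at hAe
          rw [hc, hq]
          have hcq : c * p = c * q + c := by rw [hpq]; ring
          linarith
        obtain ⟨B, hB1, hB2⟩ := ih (A \ {v}) (by omega) (by omega) hrec
        exact ⟨B, hB1.trans Set.diff_subset, hB2⟩
      · -- |A| = 2k-1 : contradiction
        exfalso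
        obtain ⟨k', rfl⟩ : ∃ k', k = k' + 2 := ⟨k - 2, by omega⟩
        have hsz' : A.ncard = 2 * k' + 3 := by omega
        have hc : 2 * (k' + 2) - 3 = 2 * k' + 1 := by omega
        have hax : A.ncard + 1 - (k' + 2) = k' + 2 := by omega
        rw [hc, hax] at hAe
        have h2 : (A \ {v}).ncard = 2 * k' + 2 := by omega
        have h1' := eSet_le' G (A \ {v})
        rw [h2] at h1'
        have h3 : 2 * k' + 2 - 1 = 2 * k' + 1 := by omega
        rw [h3] at h1'
        have hd : degIn G A v ≤ 2 * k' + 1 := by omega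
        nlinarith
    · push_neg at hdel
      by_cases hconn : IsKConnected k (G.induce A)
      · exact ⟨A, subset_rfl, hconn⟩
      · have hcard : Nat.card ↥A = A.ncard := Nat.card_coe_set_eq A
        have hklt : k < A.ncard := by
          rcases Nat.lt_or_ge k A.ncard with h | h
          · exact h
          · exfalso
            have hk1 : k = 1 := by omega
            subst hk1
            have hle := eSet_le' G A
            have h0 : A.ncard * (A.ncard - 1) = 0 := by
              rcases (by omega : A.ncard = 0 ∨ A.ncard = 1) with h' | h' <;> rw [h'] <;> rfl
            rw [h0] at hle
            norm_num at hAe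
            omega
        unfold IsKConnected at hconn
        push_neg at hconn
        obtain ⟨S, hS, hSconn⟩ := hconn (by rw [hcard]; exact hklt)
        set S₀ := Subtype.val '' S with hS₀def
        have hS₀sub : S₀ ⊆ A := by rintro x ⟨u, _, rfl⟩; exact u.2
        have hS₀card : S₀.ncard = S.ncard := Set.ncard_image_of_injective _ Subtype.val_injective
        have hA'eq : Subtype.val '' Sᶜ = A \ S₀ := val_image_compl A S
        have hconn' : ¬ (G.induce (A \ S₀)).Connected := by
          rw [← hA'eq]
          intro h
          exact hSconn (((induceInduceIso G A Sᶜ).connected_iff).mpr h)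
        have hA'card : (A \ S₀).ncard = A.ncard - S₀.ncard :=
          Set.ncard_diff hS₀sub (Set.toFinite _)
        have hA'ne : (A \ S₀).Nonempty := by
          apply Set.nonempty_of_ncard_ne_zero
          omega
        obtain ⟨A₁', A₂', hunion, hne₁, hne₂, hdisj, hcross⟩ :=
          exists_split G (A \ S₀) hA'ne hconn'
        set A₁ := A₁' ∪ S₀ with hA₁def
        set A₂ := A₂' ∪ S₀ with hA₂def
        have hsub₁' : A₁' ⊆ A \ S₀ := hunion ▸ Set.subset_union_left
        have hsub₂' : A₂' ⊆ A \ S₀ := hunion ▸ Set.subset_union_right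
        have hA₁sub : A₁ ⊆ A := Set.union_subset (hsub₁'.trans Set.diff_subset) hS₀sub
        have hA₂sub : A₂ ⊆ A := Set.union_subset (hsub₂'.trans Set.diff_subset) hS₀sub
        have hclass : ∀ z, z ∈ A → z ∈ A₁' ∨ z ∈ A₂' ∨ z ∈ S₀ := by
          intro z hz
          by_cases h : z ∈ S₀
          · exact Or.inr (Or.inr h)
          · have : z ∈ A₁' ∪ A₂' := hunion ▸ ⟨hz, h⟩
            exact this.imp id Or.inl
        -- part sizes
        have hnb₁ : ∀ v ∈ A₁', {w ∈ A | G.Adj v w} ⊆ A₁ \ {v} := by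
          rintro v hv w ⟨hwA, hadj⟩
          refine ⟨?_, fun h => G.irrefl (h ▸ hadj)⟩
          rcases hclass w hwA with h | h | h
          · exact Or.inl h
          · exact absurd hadj (hcross v hv w h)
          · exact Or.inr h
        have hnb₂ : ∀ v ∈ A₂', {w ∈ A | G.Adj v w} ⊆ A₂ \ {v} := by
          rintro v hv w ⟨hwA, hadj⟩
          refine ⟨?_, fun h => G.irrefl (h ▸ hadj)⟩
          rcases hclass w hwA with h | h | h
          · exact absurd hadj.symm (hcross w h v hv)
          · exact Or.inl h
          · exact Or.inr h
        have hsz₁ : 2 * k - 1 ≤ A₁.ncard := by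
          obtain ⟨v, hv⟩ := hne₁
          have hvA : v ∈ A := (hsub₁' hv).1
          have hmin := hdel v hvA
          have hd : degIn G A v ≤ (A₁ \ {v}).ncard :=
            Set.ncard_le_ncard (hnb₁ v hv) (Set.toFinite _)
          have heq : (A₁ \ {v}).ncard = A₁.ncard - 1 :=
            Set.ncard_diff_singleton_of_mem (s := A₁) (Or.inl hv)
          have hpos : 0 < A₁.ncard := (Set.ncard_pos (Set.toFinite _)).mpr ⟨v, Or.inl hv⟩
          omega
        have hsz₂ : 2 * k - 1 ≤ A₂.ncard := by
          obtain ⟨v, hv⟩ := hne₂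
          have hvA : v ∈ A := (hsub₂' hv).1
          have hmin := hdel v hvA
          have hd : degIn G A v ≤ (A₂ \ {v}).ncard :=
            Set.ncard_le_ncard (hnb₂ v hv) (Set.toFinite _)
          have heq : (A₂ \ {v}).ncard = A₂.ncard - 1 :=
            Set.ncard_diff_singleton_of_mem (s := A₂) (Or.inl hv)
          have hpos : 0 < A₂.ncard := (Set.ncard_pos (Set.toFinite _)).mpr ⟨v, Or.inl hv⟩
          omega
        have hU : A₁ ∪ A₂ = A := by
          have h1 : (A₁' ∪ A₂') ∪ S₀ = A := by
            rw [hunion]; exact Set.diff_union_of_subset hS₀sub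
          rw [hA₁def, hA₂def, ← h1]
          ext x
          simp only [Set.mem_union]
          tauto
        have hI : A₁ ∩ A₂ = S₀ := by
          ext x
          constructor
          · rintro ⟨h1 | h1, h2 | h2⟩
            · exact absurd h2 (Set.disjoint_left.mp hdisj h1)
            · exact h2
            · exact h1
            · exact h1
          · exact fun h => ⟨Or.inr h, Or.inr h⟩
        have hsum : A₁.ncard + A₂.ncard = A.ncard + S₀.ncard := by
          have := Set.ncard_union_add_ncard_inter A₁ A₂ (Set.toFinite _) (Set.toFinite _)
          rw [hU, hI] at this
          omega
        have hesplit : eSet G A ⊆ eSet G A₁ ∪ eSet G A₂ := by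
          rintro e ⟨he, hA⟩
          induction e with
          | h x y =>
            have hx := hA x (Sym2.mem_mk_left _ _)
            have hy := hA y (Sym2.mem_mk_right _ _)
            have hadj : G.Adj x y := (SimpleGraph.mem_edgeSet G).mp he
            have key : (x ∈ A₁ ∧ y ∈ A₁) ∨ (x ∈ A₂ ∧ y ∈ A₂) := by
              rcases hclass x hx with h | h | h <;> rcases hclass y hy with h' | h' | h'
              · exact Or.inl ⟨Or.inl h, Or.inl h'⟩
              · exact absurd hadj (hcross x h y h')
              · exact Or.inl ⟨Or.inl h, Or.inr h'⟩
              · exact absurd hadj.symm (hcross y h' x h)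
              · exact Or.inr ⟨Or.inl h, Or.inl h'⟩
              · exact Or.inr ⟨Or.inl h, Or.inr h'⟩
              · exact Or.inl ⟨Or.inr h, Or.inl h'⟩
              · exact Or.inr ⟨Or.inr h, Or.inl h'⟩
              · exact Or.inl ⟨Or.inr h, Or.inr h'⟩
            rcases key with ⟨h1, h2⟩ | ⟨h1, h2⟩
            · exact Or.inl ⟨he, fun u hu => by
                rcases Sym2.mem_iff.mp hu with rfl | rfl <;> assumption⟩
            · exact Or.inr ⟨he, fun u hu => by
                rcases Sym2.mem_iff.mp hu with rfl | rfl <;> assumption⟩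
        clear_value S₀ A₁ A₂
        have hecard : (eSet G A).ncard ≤ (eSet G A₁).ncard + (eSet G A₂).ncard :=
          le_trans (Set.ncard_le_ncard hesplit (Set.toFinite _)) (Set.ncard_union_le _ _)
        have hwin : (2 * k - 3) * (A₁.ncard + 1 - k) + 1 ≤ (eSet G A₁).ncard ∨
            (2 * k - 3) * (A₂.ncard + 1 - k) + 1 ≤ (eSet G A₂).ncard := by
          by_contra hcon
          push_neg at hcon
          obtain ⟨h1, h2⟩ := hcon
          rcases Nat.lt_or_ge k 2 with hk1 | hk2
          · have hk1' : k = 1 := by omega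
            subst hk1'
            norm_num at hAe h1 h2
            omega
          · obtain ⟨k', rfl⟩ : ∃ k', k = k' + 2 := ⟨k - 2, by omega⟩
            have hc : 2 * (k' + 2) - 3 = 2 * k' + 1 := by omega
            have hpq : (A₁.ncard + 1 - (k' + 2)) + (A₂.ncard + 1 - (k' + 2)) ≤
                A.ncard + 1 - (k' + 2) := by
              clear * - hsz₁ hsz₂ hsum hS hS₀card hAk
              omega
            rw [hc] at hAe h1 h2
            have hmul : (2 * k' + 1) * ((A₁.ncard + 1 - (k' + 2)) + (A₂.ncard + 1 - (k' + 2))) ≤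
                (2 * k' + 1) * (A.ncard + 1 - (k' + 2)) :=
              Nat.mul_le_mul_left _ hpq
            have hexp : (2 * k' + 1) * ((A₁.ncard + 1 - (k' + 2)) + (A₂.ncard + 1 - (k' + 2))) =
                (2 * k' + 1) * (A₁.ncard + 1 - (k' + 2)) +
                (2 * k' + 1) * (A₂.ncard + 1 - (k' + 2)) :=
              Nat.mul_add _ _ _
            linarith
        have hwit : ∀ (P W : Set V), P ⊆ A → W.Nonempty → Disjoint P W → W ⊆ A \ S₀ →
            (P ∪ S₀).ncard ≤ n := by
          intro P W hPsub hWne hPW hWsub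
          obtain ⟨w, hw⟩ := hWne
          have hwA : w ∈ A := (hWsub hw).1
          have hwnot : w ∉ P ∪ S₀ := by
            rintro (h | h)
            · exact Set.disjoint_left.mp hPW h hw
            · exact (hWsub hw).2 h
          have hss : P ∪ S₀ ⊂ A :=
            Set.ssubset_iff_subset_ne.mpr ⟨Set.union_subset hPsub hS₀sub,
              fun heq => hwnot (heq.symm ▸ hwA)⟩
          have := Set.ncard_lt_ncard hss (Set.toFinite _)
          omega
        rcases hwin with hw | hw
        · obtain ⟨B, hB1, hB2⟩ := ih A₁ (by rw [hA₁def]; exact hwit A₁' A₂' (hsub₁'.trans Set.diff_subset) hne₂ hdisj hsub₂') hsz₁ hw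
          exact ⟨B, hB1.trans hA₁sub, hB2⟩
        · obtain ⟨B, hB1, hB2⟩ := ih A₂ (by rw [hA₂def]; exact hwit A₂' A₁' (hsub₂'.trans Set.diff_subset) hne₁ hdisj.symm hsub₁') hsz₂ hw
          exact ⟨B, hB1.trans hA₂sub, hB2⟩


lemma eSet_univ (G : SimpleGraph V) : eSet G (Set.univ : Set V) = G.edgeSet := by
  ext e; simp [eSet]

lemma coe_induce_top (G : SimpleGraph V) (B : Set V) :
    ((⊤ : G.Subgraph).induce B).coe = G.induce B := by
  ext a b
  simp only [SimpleGraph.Subgraph.coe_adj, SimpleGraph.Subgraph.induce_adj,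
    SimpleGraph.comap_adj, Function.Embedding.coe_subtype, SimpleGraph.Subgraph.top_adj]
  exact ⟨fun h => h.2.2, fun h => ⟨a.2, b.2, h⟩⟩


end MaderAux

open MaderAux in
/-- (Mader) Every finite graph of average degree at least `4ℓ` (that is,
`2|E(G)| ≥ 4ℓ·|V(G)|` with `V(G)` nonempty) contains an `ℓ`-connected subgraph. -/
theorem mader {V : Type*} [Fintype V] [Nonempty V] (ℓ : ℕ) (G : SimpleGraph V)
    (havg : 4 * ℓ * Fintype.card V ≤ 2 * G.edgeSet.ncard) :
    ∃ H : G.Subgraph, IsKConnected ℓ H.coe := by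
  have mader_aux := MaderAux.mader_aux G ℓ
  have eSet_le' := MaderAux.eSet_le' G
  rcases Nat.eq_zero_or_pos ℓ with rfl | hℓ
  · refine ⟨⊤, ?_, fun S hS => absurd hS (Nat.not_lt_zero _)⟩
    have : Nat.card ↥((⊤ : G.Subgraph).verts) = Nat.card V := by
      rw [SimpleGraph.Subgraph.verts_top, Nat.card_coe_set_eq, Set.ncard_univ]
    rw [this]
    exact Nat.card_pos
  · have hn : (Set.univ : Set V).ncard = Fintype.card V := by
      rw [Set.ncard_univ, Nat.card_eq_fintype_card]
    set n := Fintype.card V with hndef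
    have hn1 : 1 ≤ n := Fintype.card_pos
    have hE2 : 2 * (eSet G Set.univ).ncard ≤ n * (n - 1) := by
      rw [← hn]; exact eSet_le' _
    rw [eSet_univ] at hE2
    have h4 : 4 * ℓ * n ≤ (n - 1) * n := by
      calc 4 * ℓ * n ≤ 2 * G.edgeSet.ncard := havg
        _ ≤ n * (n - 1) := hE2
        _ = (n - 1) * n := Nat.mul_comm _ _
    have h4' : 4 * ℓ ≤ n - 1 := Nat.le_of_mul_le_mul_right h4 hn1
    have h2e : 2 * ℓ * n ≤ G.edgeSet.ncard := by
      have h1 : 2 * (2 * ℓ * n) ≤ 2 * G.edgeSet.ncard := by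
        have : 2 * (2 * ℓ * n) = 4 * ℓ * n := by ring
        rw [this]; exact havg
      exact Nat.le_of_mul_le_mul_left h1 (by norm_num)
    have hedge : (2 * ℓ - 3) * (n + 1 - ℓ) + 1 ≤ G.edgeSet.ncard := by
      rcases Nat.lt_or_ge ℓ 2 with h1 | h2
      · have hℓ1 : ℓ = 1 := by omega
        subst hℓ1
        have h2n : 2 * 1 * n = 2 * n := by ring
        rw [h2n] at h2e
        norm_num
        omega
      · obtain ⟨ℓ', rfl⟩ : ∃ ℓ', ℓ = ℓ' + 2 := ⟨ℓ - 2, by omega⟩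
        have hc : 2 * (ℓ' + 2) - 3 = 2 * ℓ' + 1 := by omega
        rw [hc]
        have hsub : n + 1 - (ℓ' + 2) ≤ n := by omega
        have hm1 : (2 * ℓ' + 1) * (n + 1 - (ℓ' + 2)) ≤ (2 * ℓ' + 1) * n :=
          Nat.mul_le_mul_left _ hsub
        have hm2 : 2 * (ℓ' + 2) * n = (2 * ℓ' + 1) * n + 3 * n := by ring
        rw [hm2] at h2e
        have h3n : 1 ≤ 3 * n := by omega
        linarith
    obtain ⟨B, _, hconn⟩ := mader_aux hℓ ((Set.univ : Set V).ncard) Set.univ le_rfl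
      (by rw [hn]; omega) (by rw [eSet_univ, hn]; exact hedge)
    exact ⟨(⊤ : G.Subgraph).induce B, coe_induce_top G B ▸ hconn⟩
end

section
/- Every finite graph G with average degree at least 8ℓ contains a (not necessarily spanning) bipartite subgraph H that is ℓ-connected. -/
open Finset

set_option linter.unusedSectionVars false
set_option linter.unusedVariables false
set_option maxHeartbeats 1000000

section Aux

theorem m2_le' {V : Type*} [DecidableEq V] (G : SimpleGraph V) [DecidableRel G.Adj]
    (U : Finset V) :
    ((U ×ˢ U).filter fun p => G.Adj p.1 p.2).card ≤ U.card * U.card - U.card := by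
  rw [← Finset.offDiag_card]
  apply Finset.card_le_card
  intro p hp
  simp only [Finset.mem_filter, Finset.mem_product] at hp
  exact Finset.mem_offDiag.2 ⟨hp.1.1, hp.1.2, hp.2.ne⟩

/-- ordered count of adjacent pairs inside `U`. -/
def m2 {V : Type*} [DecidableEq V] (G : SimpleGraph V) [DecidableRel G.Adj] (U : Finset V) : ℕ :=
  ((U ×ˢ U).filter fun p => G.Adj p.1 p.2).card

/-- restriction of `G` to `U`, as a graph on `V`. -/
def restrictG {V : Type*} (G : SimpleGraph V) (U : Finset V) : SimpleGraph V where
  Adj a b := G.Adj a b ∧ a ∈ U ∧ b ∈ U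
  symm := ⟨fun a b h => ⟨h.1.symm, h.2.2, h.2.1⟩⟩
  loopless := ⟨fun a h => G.loopless.irrefl a h.1⟩

instance {V : Type*} [DecidableEq V] (G : SimpleGraph V) [DecidableRel G.Adj] (U : Finset V) :
    DecidableRel (restrictG G U).Adj := fun a b => instDecidableAnd

theorem m2_eq_two_mul {V : Type*} [Fintype V] [DecidableEq V] (G : SimpleGraph V)
    [DecidableRel G.Adj] (U : Finset V) :
    m2 G U = 2 * (restrictG G U).edgeFinset.card := by
  rw [SimpleGraph.two_mul_card_edgeFinset, m2]
  congr 1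
  ext ⟨a, b⟩
  simp [restrictG, and_comm, and_assoc]

theorem m2_even {V : Type*} [Fintype V] [DecidableEq V] (G : SimpleGraph V)
    [DecidableRel G.Adj] (U : Finset V) : Even (m2 G U) :=
  ⟨(restrictG G U).edgeFinset.card, by rw [m2_eq_two_mul]; ring⟩

theorem m2_univ {V : Type*} [Fintype V] [DecidableEq V] (G : SimpleGraph V)
    [DecidableRel G.Adj] : m2 G univ = 2 * G.edgeFinset.card := by
  rw [SimpleGraph.two_mul_card_edgeFinset, m2, Finset.univ_product_univ]

theorem m2_le {V : Type*} [Fintype V] [DecidableEq V] (G : SimpleGraph V) [DecidableRel G.Adj]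
    (U : Finset V) : m2 G U ≤ U.card * U.card - U.card :=
  m2_le' G U

theorem m2_erase {V : Type*} [DecidableEq V] (G : SimpleGraph V) [DecidableRel G.Adj]
    (U : Finset V) (v : V) :
    m2 G U ≤ m2 G (U.erase v) + 2 * (U.filter (G.Adj v)).card := by
  classical
  set d := U.filter (G.Adj v) with hd
  have hsub : (U ×ˢ U).filter (fun p => G.Adj p.1 p.2) ⊆
      (((U.erase v ×ˢ U.erase v).filter fun p => G.Adj p.1 p.2) ∪ ({v} ×ˢ d)) ∪ (d ×ˢ {v}) := by
    rintro ⟨a, b⟩ hp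
    simp only [mem_filter, mem_product] at hp
    obtain ⟨⟨haU, hbU⟩, hadj⟩ := hp
    by_cases hav : a = v
    · subst hav
      apply mem_union_left; apply mem_union_right
      simp only [mem_product, mem_singleton, hd, mem_filter]
      simp [hbU, hadj]
    · by_cases hbv : b = v
      · subst hbv
        apply mem_union_right
        simp only [mem_product, mem_singleton, hd, mem_filter]
        simp [haU, hadj.symm]
      · apply mem_union_left; apply mem_union_left
        simp only [mem_filter, mem_product, mem_erase]
        exact ⟨⟨⟨hav, haU⟩, ⟨hbv, hbU⟩⟩, hadj⟩
  calc m2 G U ≤ _ := Finset.card_le_card hsub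
    _ ≤ (((U.erase v ×ˢ U.erase v).filter fun p => G.Adj p.1 p.2) ∪ ({v} ×ˢ d)).card
        + (d ×ˢ {v}).card := Finset.card_union_le _ _
    _ ≤ ((U.erase v ×ˢ U.erase v).filter fun p => G.Adj p.1 p.2).card + ({v} ×ˢ d).card
        + (d ×ˢ {v}).card := by gcongr; exact Finset.card_union_le _ _
    _ = m2 G (U.erase v) + 2 * d.card := by
        rw [Finset.card_product, Finset.card_product]
        simp [m2]; ring

theorem m2_union_sep {V : Type*} [DecidableEq V] (G : SimpleGraph V) [DecidableRel G.Adj]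
    {U U₁ U₂ : Finset V}
    (h : ∀ a b, G.Adj a b → a ∈ U → b ∈ U → (a ∈ U₁ ∧ b ∈ U₁) ∨ (a ∈ U₂ ∧ b ∈ U₂)) :
    m2 G U ≤ m2 G U₁ + m2 G U₂ := by
  have hsub : (U ×ˢ U).filter (fun p => G.Adj p.1 p.2) ⊆
      ((U₁ ×ˢ U₁).filter fun p => G.Adj p.1 p.2) ∪ ((U₂ ×ˢ U₂).filter fun p => G.Adj p.1 p.2) := by
    rintro ⟨a, b⟩ hp
    simp only [mem_filter, mem_product, mem_union] at hp ⊢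
    rcases h a b hp.2 hp.1.1 hp.1.2 with h1 | h2
    · exact Or.inl ⟨h1, hp.2⟩
    · exact Or.inr ⟨h2, hp.2⟩
  calc m2 G U ≤ _ := Finset.card_le_card hsub
    _ ≤ _ := Finset.card_union_le _ _

theorem m2_insert_ge {V : Type*} [DecidableEq V] (G : SimpleGraph V) [DecidableRel G.Adj]
    {U : Finset V} {v : V} (hv : v ∉ U) :
    m2 G U + 2 * (U.filter (G.Adj v)).card ≤ m2 G (insert v U) := by
  classical
  set d := U.filter (G.Adj v) with hd
  have hne : ∀ b ∈ d, b ≠ v := by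
    intro b hb
    rintro rfl
    exact hv (mem_filter.1 hb).1
  have hsub : (((U ×ˢ U).filter fun p => G.Adj p.1 p.2) ∪ ({v} ×ˢ d)) ∪ (d ×ˢ {v}) ⊆
      ((insert v U ×ˢ insert v U).filter fun p => G.Adj p.1 p.2) := by
    rintro ⟨a, b⟩ hp
    simp only [mem_union, mem_filter, mem_product, mem_singleton, hd] at hp
    simp only [mem_filter, mem_product, mem_insert]
    rcases hp with (⟨⟨ha, hb⟩, hadj⟩ | ⟨ha, hb, hadj⟩) | ⟨⟨ha, hadj⟩, hb⟩
    · exact ⟨⟨Or.inr ha, Or.inr hb⟩, hadj⟩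
    · exact ⟨⟨Or.inl ha, Or.inr hb⟩, ha ▸ hadj⟩
    · exact ⟨⟨Or.inr ha, Or.inl hb⟩, hb ▸ hadj.symm⟩
  have hdisj1 : Disjoint ((U ×ˢ U).filter fun p => G.Adj p.1 p.2) ({v} ×ˢ d) := by
    rw [Finset.disjoint_left]
    rintro ⟨a, b⟩ hp hq
    simp only [mem_filter, mem_product] at hp
    simp only [mem_product, mem_singleton] at hq
    exact hv (hq.1 ▸ hp.1.1)
  have hdisj2 : Disjoint (((U ×ˢ U).filter fun p => G.Adj p.1 p.2) ∪ ({v} ×ˢ d)) (d ×ˢ {v}) := by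
    rw [Finset.disjoint_left]
    rintro ⟨a, b⟩ hp hq
    simp only [mem_product, mem_singleton] at hq
    simp only [mem_union, mem_filter, mem_product, mem_singleton] at hp
    rcases hp with ⟨⟨ha, hb⟩, _⟩ | ⟨ha, hb⟩
    · exact hv (hq.2 ▸ hb)
    · exact hne b hb hq.2
  calc m2 G U + 2 * d.card
      = (((U ×ˢ U).filter fun p => G.Adj p.1 p.2) ∪ ({v} ×ˢ d) ∪ (d ×ˢ {v})).card := by
        rw [Finset.card_union_of_disjoint hdisj2, Finset.card_union_of_disjoint hdisj1,
          Finset.card_product, Finset.card_product]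
        simp [m2]; ring
    _ ≤ _ := Finset.card_le_card hsub

def cutGraph {V : Type*} [DecidableEq V] (G : SimpleGraph V) (A : Finset V) : SimpleGraph V where
  Adj a b := G.Adj a b ∧ (a ∈ A ↔ b ∉ A)
  symm := ⟨fun a b h => ⟨h.1.symm, by tauto⟩⟩
  loopless := ⟨fun a h => G.loopless.irrefl a h.1⟩

instance {V : Type*} [DecidableEq V] (G : SimpleGraph V) [DecidableRel G.Adj] (A : Finset V) :
    DecidableRel (cutGraph G A).Adj := fun a b => instDecidableAnd

theorem cutGraph_le {V : Type*} [DecidableEq V] (G : SimpleGraph V) (A : Finset V) :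
    cutGraph G A ≤ G := fun a b h => h.1

theorem maxcut {V : Type*} [DecidableEq V] (G : SimpleGraph V) [DecidableRel G.Adj]
    (S : Finset V) : ∃ A : Finset V, A ⊆ S ∧ m2 G S ≤ 2 * m2 (cutGraph G A) S := by
  classical
  induction S using Finset.induction_on with
  | empty => exact ⟨∅, Finset.Subset.refl _, by simp [m2]⟩
  | insert _ _ hv =>
    rename_i v S ih
    obtain ⟨A, hAS, hA⟩ := ih
    have hvA : v ∉ A := fun h => hv (hAS h)
    set dA := S.filter (fun b => G.Adj v b ∧ b ∈ A) with hdA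
    set dB := S.filter (fun b => G.Adj v b ∧ b ∉ A) with hdB
    have hsplit : dA.card + dB.card = (S.filter (G.Adj v)).card := by
      rw [hdA, hdB]
      rw [← Finset.filter_filter, ← Finset.filter_filter]
      exact Finset.card_filter_add_card_filter_not _
    -- the side choice
    by_cases hcmp : dB.card ≤ dA.card
    · -- keep A; v is not in A
      refine ⟨A, hAS.trans (Finset.subset_insert _ _), ?_⟩
      have h1 : (S.filter ((cutGraph G A).Adj v)) = dA := by
        apply Finset.filter_congr
        intro b hb
        simp only [cutGraph, hvA, hdA]
        constructor
        · rintro ⟨h, h'⟩; exact ⟨h, by tauto⟩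
        · rintro ⟨h, h'⟩; exact ⟨h, by tauto⟩
      have h2 := m2_insert_ge (cutGraph G A) hv
      rw [h1] at h2
      have h3 := m2_erase G (insert v S) v
      rw [Finset.erase_insert hv] at h3
      have h4 : ((insert v S).filter (G.Adj v)).card = (S.filter (G.Adj v)).card := by
        rw [Finset.filter_insert]
        simp [G.loopless.irrefl v]
      omega
    · refine ⟨insert v A, Finset.insert_subset_insert _ hAS, ?_⟩
      have hm2A : m2 (cutGraph G (insert v A)) S = m2 (cutGraph G A) S := by
        unfold m2
        congr 1
        apply Finset.filter_congr
        rintro ⟨a, b⟩ hab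
        simp only [Finset.mem_product] at hab
        have ha : a ≠ v := fun h => hv (h ▸ hab.1)
        have hb : b ≠ v := fun h => hv (h ▸ hab.2)
        simp only [cutGraph, Finset.mem_insert, ha, hb, false_or]
      have h1 : (S.filter ((cutGraph G (insert v A)).Adj v)) = dB := by
        apply Finset.filter_congr
        intro b hb
        have hbv : b ≠ v := fun h => hv (h ▸ hb)
        simp only [cutGraph, Finset.mem_insert, hbv, hdB, true_or, false_or]
        constructor
        · rintro ⟨h, h'⟩; exact ⟨h, by tauto⟩
        · rintro ⟨h, h'⟩; exact ⟨h, by tauto⟩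
      have h2 := m2_insert_ge (cutGraph G (insert v A)) hv
      rw [h1, hm2A] at h2
      have h3 := m2_erase G (insert v S) v
      rw [Finset.erase_insert hv] at h3
      have h4 : ((insert v S).filter (G.Adj v)).card = (S.filter (G.Adj v)).card := by
        rw [Finset.filter_insert]
        simp [G.loopless.irrefl v]
      omega

theorem sep {V : Type*} [Fintype V] [DecidableEq V] (G : SimpleGraph V) [DecidableRel G.Adj]
    (k : ℕ) (U : Finset V) (hUk : k < U.card)
    (h : ¬ IsKConnected k (G.induce (U : Set V))) :
    ∃ U₁ U₂ : Finset V, U₁ ∪ U₂ = U ∧ (U₁ \ U₂).Nonempty ∧ (U₂ \ U₁).Nonempty ∧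
      (U₁ ∩ U₂).card < k ∧ ∀ a ∈ U₁ \ U₂, ∀ b ∈ U₂ \ U₁, ¬ G.Adj a b := by
  classical
  have hcard : Nat.card ↥(U : Set V) = U.card := by
    rw [Nat.card_coe_set_eq, Set.ncard_coe_finset]
  rw [IsKConnected] at h
  push_neg at h
  obtain ⟨S, hSk, hdis⟩ := h (by rw [hcard]; exact hUk)
  -- the separator, as a finset in V
  let T : Finset V := (Set.toFinset S).image Subtype.val
  have hTcard : T.card < k := by
    have h1 : T.card ≤ (Set.toFinset S).card := Finset.card_image_le
    have h2 : (Set.toFinset S).card = S.ncard := (Set.ncard_eq_toFinset_card' S).symm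
    omega
  have hTU : T ⊆ U := by
    intro a ha
    obtain ⟨z, hz, rfl⟩ := Finset.mem_image.1 ha
    exact Finset.mem_coe.1 z.2
  -- the graph after deleting S
  set R := (SimpleGraph.induce (U : Set V) G).induce Sᶜ with hR
  have hRne : Nonempty ↥(Sᶜ : Set ↥(U : Set V)) := by
    by_contra hne
    rw [not_nonempty_iff] at hne
    have : Sᶜ = (∅ : Set ↥(U : Set V)) := Set.isEmpty_coe_sort.mp hne
    have hSuniv : S = Set.univ := by
      rw [← Set.compl_empty_iff]; exact this
    rw [hSuniv, Set.ncard_univ, hcard] at hSk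
    omega
  have hpre : ¬ R.Preconnected := by
    intro hp
    exact hdis ⟨hp⟩
  rw [SimpleGraph.Preconnected] at hpre
  push_neg at hpre
  obtain ⟨x, y, hxy⟩ := hpre
  -- reachability predicate on V
  set reach : V → Prop := fun v =>
    ∃ (hv : v ∈ (U : Set V)) (hv' : (⟨v, hv⟩ : ↥(U : Set V)) ∈ Sᶜ),
      R.Reachable x ⟨⟨v, hv⟩, hv'⟩ with hreach
  set F : Finset V := U.filter reach with hF
  refine ⟨T ∪ F, U \ F, ?_, ?_, ?_, ?_, ?_⟩
  · -- union = U
    apply Finset.Subset.antisymm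
    · intro a ha
      rcases Finset.mem_union.1 ha with h1 | h2
      · rcases Finset.mem_union.1 h1 with h3 | h4
        · exact hTU h3
        · exact (Finset.mem_filter.1 h4).1
      · exact (Finset.mem_sdiff.1 h2).1
    · intro a ha
      by_cases haF : a ∈ F
      · exact Finset.mem_union_left _ (Finset.mem_union_right _ haF)
      · exact Finset.mem_union_right _ (Finset.mem_sdiff.2 ⟨ha, haF⟩)
  · -- x's value is in (T ∪ F) \ (U \ F)
    refine ⟨x.1.1, ?_⟩
    have hxU : x.1.1 ∈ U := Finset.mem_coe.1 x.1.2
    have hxF : x.1.1 ∈ F := by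
      rw [hF, Finset.mem_filter]
      exact ⟨hxU, x.1.2, x.2, SimpleGraph.Reachable.refl _⟩
    rw [Finset.mem_sdiff]
    refine ⟨Finset.mem_union_right _ hxF, ?_⟩
    rw [Finset.mem_sdiff]
    push_neg
    intro _
    exact hxF
  · -- y's value is in (U \ F) \ (T ∪ F)
    refine ⟨y.1.1, ?_⟩
    have hyU : y.1.1 ∈ U := Finset.mem_coe.1 y.1.2
    have hyF : y.1.1 ∉ F := by
      rw [hF, Finset.mem_filter]
      rintro ⟨-, hv, hv', hr⟩
      exact hxy hr
    have hyT : y.1.1 ∉ T := by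
      intro hyT
      obtain ⟨z, hz, hzval⟩ := Finset.mem_image.1 hyT
      have hzS : z ∈ S := Set.mem_toFinset.1 hz
      have : z = y.1 := Subtype.ext hzval
      exact y.2 (this ▸ hzS)
    rw [Finset.mem_sdiff, Finset.mem_union]
    exact ⟨Finset.mem_sdiff.2 ⟨hyU, hyF⟩, fun h => h.elim hyT hyF⟩
  · -- intersection is small
    have hsub : (T ∪ F) ∩ (U \ F) ⊆ T := by
      intro a ha
      rw [Finset.mem_inter, Finset.mem_union, Finset.mem_sdiff] at ha
      rcases ha.1 with h1 | h2
      · exact h1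
      · exact absurd h2 ha.2.2
    calc ((T ∪ F) ∩ (U \ F)).card ≤ T.card := Finset.card_le_card hsub
      _ < k := hTcard
  · -- no edges across
    intro a ha b hb hadj
    rw [Finset.mem_sdiff] at ha hb
    have haU : a ∈ U := by
      rcases Finset.mem_union.1 ha.1 with h1 | h2
      · exact hTU h1
      · exact (Finset.mem_filter.1 h2).1
    have haF : a ∈ F := by
      by_contra haF
      exact ha.2 (Finset.mem_sdiff.2 ⟨haU, haF⟩)
    obtain ⟨hbU, hbF⟩ := Finset.mem_sdiff.1 hb.1
    have hbT : b ∉ T := fun h => hb.2 (Finset.mem_union_left _ h)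
    obtain ⟨-, hva, hva', hra⟩ := Finset.mem_filter.1 haF
    have hvb : b ∈ (U : Set V) := Finset.mem_coe.2 hbU
    have hvb' : (⟨b, hvb⟩ : ↥(U : Set V)) ∈ Sᶜ := by
      intro hbS
      exact hbT (Finset.mem_image.2 ⟨⟨b, hvb⟩, Set.mem_toFinset.2 hbS, rfl⟩)
    have hRadj : R.Adj ⟨⟨a, hva⟩, hva'⟩ ⟨⟨b, hvb⟩, hvb'⟩ := hadj
    apply hbF
    rw [hF, Finset.mem_filter]
    exact ⟨hbU, hvb, hvb', hra.trans hRadj.reachable⟩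

theorem mader_aux {V : Type*} [Fintype V] [DecidableEq V] (G : SimpleGraph V)
    [DecidableRel G.Adj] (k : ℕ) (hk : 1 ≤ k) (U : Finset V)
    (hcard : 2 * k ≤ U.card + 1)
    (hedge : 2 * (2 * k - 3) * (U.card + 1) + 2 ≤ m2 G U + 2 * (2 * k - 3) * k) :
    ∃ W, W ⊆ U ∧ IsKConnected k (SimpleGraph.induce (W : Set V) G) := by
  classical
  induction U using Finset.strongInductionOn with
  | _ U ih =>
  set c := 2 * k - 3 with hc
  set n := U.card with hn
  by_cases hdeg : ∃ v ∈ U, (U.filter (G.Adj v)).card + 3 ≤ 2 * k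
  · -- delete a low-degree vertex
    obtain ⟨v, hvU, hd⟩ := hdeg
    have hk2 : 2 ≤ k := by omega
    have hdc : (U.filter (G.Adj v)).card ≤ c := by omega
    have hB : m2 G U ≤ m2 G (U.erase v) + 2 * c := by
      have := m2_erase G U v
      omega
    have hcard' : (U.erase v).card = n - 1 := by
      rw [Finset.card_erase_of_mem hvU]
    have hn1 : 1 ≤ n := by
      rw [hn]
      exact Finset.card_pos.2 ⟨v, hvU⟩
    by_cases hn2 : 2 * k ≤ n
    · -- apply IH to U.erase v
      have hedge' : 2 * c * ((U.erase v).card + 1) + 2 ≤ m2 G (U.erase v) + 2 * c * k := by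
        rw [hcard']
        have hone : n - 1 + 1 = n := by omega
        rw [hone]
        have hl : 2 * c * (n + 1) = 2 * c * n + 2 * c := by ring
        omega
      obtain ⟨W, hWU, hW⟩ := ih (U.erase v) (Finset.erase_ssubset hvU)
        (by rw [hcard']; omega) hedge'
      exact ⟨W, hWU.trans (Finset.erase_subset _ _), hW⟩
    · -- n = 2k - 1 : contradiction
      exfalso
      have hn3 : n = 2 * k - 1 := by omega
      obtain ⟨j, rfl⟩ : ∃ j, k = j + 2 := ⟨k - 2, by omega⟩
      have hcj : c = 2 * j + 1 := by omega
      have hnj : n = 2 * j + 3 := by omega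
      have hA := m2_le G (U.erase v)
      have hen : (U.erase v).card = 2 * j + 2 := by omega
      rw [hen] at hA
      rw [hcj, hnj] at hedge
      rw [hcj] at hB
      have q1 : 2 * (2*j+1) * (2*j+3+1) = 2 * (2 * (2*j+1) * (j+2)) := by ring
      have q2 : 2 * (2*j+1) * (j+2) = 2 * ((j+1)*(2*j+1)) + 2 * (2*j+1) := by ring
      have ep : (2*j+2) * (2*j+2) = 2 * ((j+1)*(2*j+1)) + (2*j+2) := by ring
      omega
  · -- min degree at least 2k-2
    push_neg at hdeg
    have hmindeg : ∀ v ∈ U, 2 * k ≤ (U.filter (G.Adj v)).card + 2 := by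
      intro v hv
      have := hdeg v hv
      omega
    by_cases hconn : IsKConnected k (SimpleGraph.induce (U : Set V) G)
    · exact ⟨U, Finset.Subset.refl _, hconn⟩
    · -- separate
      have hkU : k < U.card := by
        by_cases hk1 : 2 ≤ k
        · omega
        · -- k = 1 : need n ≥ 2 from m2 ≥ 2
          have hc0 : c = 0 := by omega
          have hA := m2_le G U
          rw [hc0] at hedge
          simp only [Nat.mul_zero, Nat.zero_mul, Nat.mul_one, Nat.zero_add, Nat.add_zero] at hedge
          have h2 : 2 ≤ m2 G U := by omega
          rcases (show U.card = 0 ∨ U.card = 1 ∨ 2 ≤ U.card by omega) with h | h | h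
          · rw [h] at hA; simp at hA; omega
          · rw [h] at hA; simp at hA; omega
          · omega
      obtain ⟨U₁, U₂, hunion, hne₁, hne₂, hints, hnoadj⟩ := sep G k U hkU hconn
      have h₁U : U₁ ⊆ U := hunion ▸ Finset.subset_union_left
      have h₂U : U₂ ⊆ U := hunion ▸ Finset.subset_union_right
      -- edges split
      have hsplit : m2 G U ≤ m2 G U₁ + m2 G U₂ := by
        apply m2_union_sep
        intro a b hadj haU hbU
        have ha' : a ∈ U₁ ∪ U₂ := hunion ▸ haU
        have hb' : b ∈ U₁ ∪ U₂ := hunion ▸ hbU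
        rw [Finset.mem_union] at ha' hb'
        by_cases ha1 : a ∈ U₁ <;> by_cases hb1 : b ∈ U₁ <;>
          by_cases ha2 : a ∈ U₂ <;> by_cases hb2 : b ∈ U₂ <;>
          first
            | tauto
            | exact absurd hadj
                (hnoadj a (Finset.mem_sdiff.2 ⟨ha1, ha2⟩) b (Finset.mem_sdiff.2 ⟨hb2, hb1⟩))
            | exact absurd hadj.symm
                (hnoadj b (Finset.mem_sdiff.2 ⟨hb1, hb2⟩) a (Finset.mem_sdiff.2 ⟨ha2, ha1⟩))
      -- each side is large
      have hbig : ∀ (A B : Finset V), A ∪ B = U → (A \ B).Nonempty →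
          (∀ a ∈ A \ B, ∀ b ∈ B \ A, ¬ G.Adj a b) → 2 * k ≤ A.card + 1 := by
        intro A B hAB hne hno
        obtain ⟨v, hv⟩ := hne
        rw [Finset.mem_sdiff] at hv
        have hvU : v ∈ U := hAB ▸ Finset.mem_union_left _ hv.1
        have hnb : insert v (U.filter (G.Adj v)) ⊆ A := by
          intro b hbmem
          rcases Finset.mem_insert.1 hbmem with rfl | hbf
          · exact hv.1
          · rw [Finset.mem_filter] at hbf
            by_contra hbA
            have hbB : b ∈ B \ A := by
              rw [Finset.mem_sdiff]
              refine ⟨?_, hbA⟩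
              have : b ∈ A ∪ B := hAB ▸ hbf.1
              rcases Finset.mem_union.1 this with h | h
              · exact absurd h hbA
              · exact h
            exact hno v (Finset.mem_sdiff.2 hv) b hbB hbf.2
        have hvnf : v ∉ U.filter (G.Adj v) := by
          rw [Finset.mem_filter]
          rintro ⟨-, h⟩
          exact G.loopless.irrefl v h
        have : (U.filter (G.Adj v)).card + 1 ≤ A.card := by
          rw [← Finset.card_insert_of_notMem hvnf]
          exact Finset.card_le_card hnb
        have := hmindeg v hvU
        omega
      have hn₁ : 2 * k ≤ U₁.card + 1 := hbig U₁ U₂ hunion hne₁ hnoadj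
      have hn₂ : 2 * k ≤ U₂.card + 1 := by
        apply hbig U₂ U₁ (by rw [Finset.union_comm]; exact hunion) hne₂
        intro a ha b hb hadj
        exact hnoadj b hb a ha hadj.symm
      have hss₁ : U₁ ⊂ U := by
        obtain ⟨y, hy⟩ := hne₂
        rw [Finset.mem_sdiff] at hy
        exact ⟨h₁U, fun hcon => hy.2 (hcon (h₂U hy.1))⟩
      have hss₂ : U₂ ⊂ U := by
        obtain ⟨y, hy⟩ := hne₁
        rw [Finset.mem_sdiff] at hy
        exact ⟨h₂U, fun hcon => hy.2 (hcon (h₁U hy.1))⟩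
      -- counting: one of the two sides satisfies the edge condition
      have hcards : U₁.card + U₂.card = n + (U₁ ∩ U₂).card := by
        rw [hn, ← hunion]
        rw [← Finset.card_union_add_card_inter]
      by_cases hE1 : 2 * c * (U₁.card + 1) + 2 ≤ m2 G U₁ + 2 * c * k
      · obtain ⟨W, hWU, hW⟩ := ih U₁ hss₁ hn₁ hE1
        exact ⟨W, hWU.trans h₁U, hW⟩
      · have hE2 : 2 * c * (U₂.card + 1) + 2 ≤ m2 G U₂ + 2 * c * k := by
          by_contra hE2
          push_neg at hE1 hE2
          obtain ⟨r1, hr1⟩ := m2_even G U₁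
          obtain ⟨r2, hr2⟩ := m2_even G U₂
          have e1 : 2 * c * (U₁.card + 1) = 2 * (c * (U₁.card + 1)) := by ring
          have e2 : 2 * c * (U₂.card + 1) = 2 * (c * (U₂.card + 1)) := by ring
          have e3 : 2 * (c * (U₁.card + 1)) + 2 * (c * (U₂.card + 1))
              = 2 * (c * (U₁.card + U₂.card + 2)) := by ring
          have e4 : 2 * (c * (U₁.card + U₂.card + 2))
              = 2 * (c * (n + (U₁ ∩ U₂).card + 2)) := by rw [hcards]
          have e5 : c * (n + (U₁ ∩ U₂).card + 2) ≤ c * (n + k + 1) :=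
            Nat.mul_le_mul_left c (by omega)
          have e6 : 2 * (c * (n + k + 1)) = 2 * c * (n + 1) + 2 * (c * k) := by ring
          have e7 : 2 * c * k = 2 * (c * k) := by ring
          omega
        obtain ⟨W, hWU, hW⟩ := ih U₂ hss₂ hn₂ hE2
        exact ⟨W, hWU.trans h₂U, hW⟩

/-- the subgraph of `G` on vertex set `W` with the edges of a smaller graph `G'`. -/
def toSub {V : Type*} (G G' : SimpleGraph V) (hle : ∀ a b, G'.Adj a b → G.Adj a b)
    (W : Finset V) : G.Subgraph where
  verts := ↑W
  Adj a b := a ∈ W ∧ b ∈ W ∧ G'.Adj a b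
  adj_sub h := hle _ _ h.2.2
  edge_vert h := h.1
  symm := ⟨fun a b h => ⟨h.2.1, h.1, h.2.2.symm⟩⟩

theorem toSub_coe {V : Type*} (G G' : SimpleGraph V) (hle : ∀ a b, G'.Adj a b → G.Adj a b)
    (W : Finset V) : (toSub G G' hle W).coe = SimpleGraph.induce (W : Set V) G' := by
  ext ⟨a, ha⟩ ⟨b, hb⟩
  simp only [SimpleGraph.Subgraph.coe_adj, toSub, SimpleGraph.comap_adj,
    Function.Embedding.coe_subtype, SimpleGraph.induce]
  constructor
  · rintro ⟨-, -, h⟩; exact h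
  · intro h; exact ⟨Finset.mem_coe.1 ha, Finset.mem_coe.1 hb, h⟩

/-- Every finite graph `G` with average degree at least `8ℓ` (that is,
`2|E(G)| ≥ 8ℓ·|V(G)|` with `V(G)` nonempty) contains a (not necessarily spanning)
bipartite subgraph `H` that is `ℓ`-connected. -/
theorem bipartite_mader {V : Type*} [Fintype V] [Nonempty V] (ℓ : ℕ) (G : SimpleGraph V)
    (havg : 8 * ℓ * Fintype.card V ≤ 2 * G.edgeSet.ncard) :
    ∃ H : G.Subgraph, IsBipartite H.coe ∧ IsKConnected ℓ H.coe := by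
  classical
  rcases Nat.eq_zero_or_pos ℓ with hl0 | hl1
  · -- trivial case ℓ = 0 : a single vertex
    subst hl0
    obtain ⟨v⟩ := ‹Nonempty V›
    refine ⟨toSub G G (fun _ _ h => h) {v}, ⟨∅, ?_⟩, ?_, ?_⟩
    · rintro ⟨u, hu⟩ ⟨w, hw⟩ huw
      exfalso
      rw [SimpleGraph.Subgraph.coe_adj] at huw
      obtain ⟨h1, h2, h3⟩ := huw
      rw [Finset.mem_singleton] at h1 h2
      rw [h1, h2] at h3
      exact G.loopless.irrefl v h3
    · show 0 < Nat.card ↥(({v} : Finset V) : Set V)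
      rw [Nat.card_coe_set_eq, Set.ncard_coe_finset]
      simp
    · intro S hS
      exact absurd hS (by omega)
  · -- main case
    have hN1 : 1 ≤ Fintype.card V := Fintype.card_pos
    set N := Fintype.card V with hNdef
    -- convert the hypothesis into m2 form
    have hE : G.edgeSet.ncard = G.edgeFinset.card := by
      simp [Set.ncard_eq_toFinset_card', SimpleGraph.edgeFinset]
    obtain ⟨A, -, hA⟩ := maxcut G (univ : Finset V)
    have hm2G : m2 G univ = 2 * G.edgeFinset.card := m2_univ G
    have huniv : (univ : Finset V).card = N := by rw [Finset.card_univ]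
    -- m2 (cutGraph G A) univ ≥ 4 ℓ N
    have hm : 4 * (ℓ * N) ≤ m2 (cutGraph G A) univ := by
      have l1 : 8 * ℓ * N = 2 * (2 * (2 * (ℓ * N))) := by ring
      omega
    -- N ≥ 4ℓ
    have hm2le := m2_le (cutGraph G A) univ
    rw [huniv] at hm2le
    have hNl : 4 * ℓ ≤ N := by
      have l2 : 4 * ℓ * N ≤ N * N := by
        have l3 : 4 * ℓ * N = 4 * (ℓ * N) := by ring
        have l4 : N * N - N ≤ N * N := Nat.sub_le _ _
        omega
      exact Nat.le_of_mul_le_mul_right l2 hN1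
    set c := 2 * ℓ - 3 with hc
    have hedge : 2 * c * ((univ : Finset V).card + 1) + 2 ≤ m2 (cutGraph G A) univ + 2 * c * ℓ := by
      rw [huniv]
      have a1 : 2 * c * (N + 1) = 2 * (c * N) + 2 * c := by ring
      have a2 : 2 * c * ℓ = 2 * (c * ℓ) := by ring
      have a3 : c * N ≤ 2 * (ℓ * N) := by
        have : c * N ≤ (2 * ℓ) * N := Nat.mul_le_mul_right N (by omega)
        have l5 : (2 * ℓ) * N = 2 * (ℓ * N) := by ring
        omega
      rcases Nat.lt_or_ge ℓ 2 with h2 | h2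
      · -- ℓ = 1, c = 0
        have hc0 : c = 0 := by omega
        have hln : 1 ≤ ℓ * N := Nat.mul_pos hl1 hN1
        rw [hc0]
        omega
      · have hc1 : 1 ≤ c := by omega
        have a4 : c * 2 ≤ c * ℓ := Nat.mul_le_mul_left c h2
        have hln : 1 ≤ ℓ * N := Nat.mul_pos hl1 hN1
        omega
    obtain ⟨W, -, hW⟩ := mader_aux (cutGraph G A) ℓ hl1 univ (by omega) hedge
    refine ⟨toSub G (cutGraph G A) (fun a b h => h.1) W, ?_, ?_⟩
    · refine ⟨{x : ↥((W : Set V)) | (x : V) ∈ A}, ?_⟩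
      rintro ⟨u, hu⟩ ⟨w, hw⟩ huw
      rw [SimpleGraph.Subgraph.coe_adj] at huw
      obtain ⟨-, -, -, hiff⟩ := huw
      exact hiff
    · rw [toSub_coe]
      exact hW

end Aux
end

section
/- Let H₁ and H₂ be two vertex-disjoint graphs, each of which is k-connected, and let H be a graph obtained from the disjoint union of H₁ and H₂ by adding a set of k pairwise independent (i.e., pairwise non-adjacent) edges, each having one endpoint in V(H₁) and the other in V(H₂). Then H is k-connected. -/
lemma reach_aux {V : Type*} (H : SimpleGraph V) (A S : Set V)
    (hconn : ((H.induce A).induce ((Subtype.val ⁻¹' S : Set ↥A)ᶜ)).Connected)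
    (x y : ↥(Sᶜ)) (hx : (x : V) ∈ A) (hy : (y : V) ∈ A) :
    (H.induce Sᶜ).Reachable x y := by
  let φ : ((H.induce A).induce ((Subtype.val ⁻¹' S : Set ↥A)ᶜ)) →g (H.induce Sᶜ) :=
    ⟨fun u => ⟨u.1.1, u.2⟩, fun h => h⟩
  have hx' : (⟨(x : V), hx⟩ : ↥A) ∈ ((Subtype.val ⁻¹' S : Set ↥A)ᶜ) := x.2
  have hy' : (⟨(y : V), hy⟩ : ↥A) ∈ ((Subtype.val ⁻¹' S : Set ↥A)ᶜ) := y.2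
  have := (hconn ⟨⟨(x : V), hx⟩, hx'⟩ ⟨⟨(y : V), hy⟩, hy'⟩).map φ
  have ex : φ ⟨⟨(x : V), hx⟩, hx'⟩ = x := Subtype.ext rfl
  have ey : φ ⟨⟨(y : V), hy⟩, hy'⟩ = y := Subtype.ext rfl
  rwa [ex, ey] at this

lemma ncard_pre {V : Type*} [Fintype V] (A S : Set V) :
    (Subtype.val ⁻¹' S : Set ↥A).ncard ≤ S.ncard := by
  rw [← Set.ncard_image_of_injective _ Subtype.val_injective, Subtype.image_preimage_coe]
  exact Set.ncard_le_ncard Set.inter_subset_right S.toFinite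

/-- Let `H₁ = H.induce A` and `H₂ = H.induce Aᶜ` be two vertex-disjoint graphs, each of
which is `k`-connected, and let `H` be a graph obtained from the disjoint union of `H₁`
and `H₂` by adding a set of `k` pairwise independent (i.e. pairwise non-adjacent) edges
`a i — b i`, each having one endpoint in `A = V(H₁)` and the other in `Aᶜ = V(H₂)`
(and no other edges between the two sides). Then `H` is `k`-connected. -/
theorem merge_two_k_connected {V : Type*} [Fintype V] (k : ℕ) (H : SimpleGraph V) (A : Set V)
    (h1 : IsKConnected k (H.induce A))
    (h2 : IsKConnected k (H.induce Aᶜ))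
    (a b : Fin k → V)
    (ha : ∀ i, a i ∈ A) (hb : ∀ i, b i ∈ Aᶜ)
    (hainj : Function.Injective a) (hbinj : Function.Injective b)
    (hcross : ∀ u ∈ A, ∀ v ∈ Aᶜ, (H.Adj u v ↔ ∃ i : Fin k, u = a i ∧ v = b i)) :
    IsKConnected k H := by
  classical
  constructor
  · exact lt_of_lt_of_le h1.1 (Nat.card_le_card_of_injective _ Subtype.val_injective)
  intro S hS
  -- find a surviving cross edge
  have hi : ∃ i : Fin k, a i ∉ S ∧ b i ∉ S := by
    by_contra hcon
    push_neg at hcon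
    have hf : ∀ i : Fin k, a i ∈ S ∨ b i ∈ S := by
      intro i
      by_cases h : a i ∈ S
      · exact Or.inl h
      · exact Or.inr (hcon i h)
    let f : Fin k → ↥S := fun i =>
      if h : a i ∈ S then ⟨a i, h⟩ else ⟨b i, (hf i).resolve_left h⟩
    have hfinj : Function.Injective f := by
      intro i j hij
      simp only [f] at hij
      split_ifs at hij with h h' h' <;> rw [Subtype.mk.injEq] at hij
      · exact hainj hij
      · exact absurd (hij ▸ ha i) (hb j)
      · exact absurd (hij.symm ▸ ha j) (hb i)
      · exact hbinj hij
    have : k ≤ S.ncard := by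
      rw [← Nat.card_coe_set_eq]
      simpa using Nat.card_le_card_of_injective f hfinj
    omega
  obtain ⟨i, hai, hbi⟩ := hi
  -- connectivity of the two sides after deletion
  have hc1 := h1.2 (Subtype.val ⁻¹' S) (lt_of_le_of_lt (ncard_pre A S) hS)
  have hc2 := h2.2 (Subtype.val ⁻¹' S) (lt_of_le_of_lt (ncard_pre Aᶜ S) hS)
  have hreachA : ∀ (x y : ↥(Sᶜ)), (x : V) ∈ A → (y : V) ∈ A →
      (H.induce Sᶜ).Reachable x y := fun x y hx hy => reach_aux H A S hc1 x y hx hy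
  have hreachB : ∀ (x y : ↥(Sᶜ)), (x : V) ∈ Aᶜ → (y : V) ∈ Aᶜ →
      (H.induce Sᶜ).Reachable x y := fun x y hx hy => reach_aux H Aᶜ S hc2 x y hx hy
  have haiS : (a i : V) ∈ Sᶜ := hai
  have hbiS : (b i : V) ∈ Sᶜ := hbi
  have hedge : (H.induce Sᶜ).Adj ⟨a i, haiS⟩ ⟨b i, hbiS⟩ :=
    (hcross (a i) (ha i) (b i) (hb i)).mpr ⟨i, rfl, rfl⟩
  have hcrossReach : ∀ (x y : ↥(Sᶜ)), (x : V) ∈ A → (y : V) ∈ Aᶜ →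
      (H.induce Sᶜ).Reachable x y := by
    intro x y hx hy
    exact (hreachA x ⟨a i, haiS⟩ hx (ha i)).trans
      (hedge.reachable.trans (hreachB ⟨b i, hbiS⟩ y (hb i) hy))
  rw [SimpleGraph.connected_iff]
  refine ⟨?_, ⟨⟨a i, haiS⟩⟩⟩
  · intro x y
    by_cases hx : (x : V) ∈ A <;> by_cases hy : (y : V) ∈ A
    · exact hreachA x y hx hy
    · exact hcrossReach x y hx hy
    · exact (hcrossReach y x hy hx).symm
    · exact hreachB x y hx hy
end

section
/- Let G₁, …, G_t be pairwise vertex-disjoint k-connected graphs, let U = {u_{t+1}, …, u_{t+s}} be a set of s vertices disjoint from V(G_i) for every 1 ≤ i ≤ t, let R be a k-connected graph on the vertex set {1, …, t+s}, and let X = (G₁, …, G_t, u_{t+1}, …, u_{t+s}), where V(X_i) = V(G_i) for i ≤ t and V(X_i) = {u_i} for i > t. Suppose G is a graph such that: (i) the disjoint union of the elements of X is a spanning subgraph of G; (ii) for every edge ij of R there exists an edge of G with one endpoint in V(X_i) and the other in V(X_j); and (iii) for every 1 ≤ i ≤ t there exists a set of k pairwise independent edges of G between V(G_i) and k distinct vertex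 sets V(X_{j₁}), …, V(X_{j_k}) with j₁, …, j_k all different from i. Then G is k-connected. -/
lemma reach_in_part {V : Type*} [Fintype V] {k : ℕ} {G : SimpleGraph V} {S A : Set V}
    (hS : S.ncard < k) {H : SimpleGraph A} (hle : H ≤ G.induce A)
    (hH : IsKConnected k H) {u v : V} (hu : u ∈ A) (hv : v ∈ A)
    (hu' : u ∉ S) (hv' : v ∉ S) :
    (G.induce Sᶜ).Reachable ⟨u, hu'⟩ ⟨v, hv'⟩ := by
  set T : Set A := Subtype.val ⁻¹' S with hTdef
  have hTc : T.ncard < k := by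
    have h1 : (Subtype.val '' T).ncard = T.ncard :=
      Set.ncard_image_of_injective _ Subtype.val_injective
    have h2 : (Subtype.val '' T).ncard ≤ S.ncard :=
      Set.ncard_le_ncard (Set.image_preimage_subset _ _) S.toFinite
    omega
  have hconn := (hH.2 T hTc).preconnected
  have hr : (H.induce Tᶜ).Reachable ⟨⟨u, hu⟩, hu'⟩ ⟨⟨v, hv⟩, hv'⟩ := hconn _ _
  let φ : (H.induce Tᶜ) →g (G.induce Sᶜ) :=
    { toFun := fun x => ⟨x.1.1, x.2⟩
      map_rel' := fun {x y} h => hle h }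
  exact hr.map φ


/-- Let `V(G)` be partitioned into parts `P 0, …, P (t+s-1)`, where for `i < t` the part
`P i` carries a `k`-connected graph `Hᵢ` which is a subgraph of `G` (so the disjoint union
of the `Hᵢ` and the singleton parts `P i = {uᵢ}`, `t ≤ i`, is a spanning subgraph of `G`).
Let `R` be a `k`-connected graph on `{0, …, t+s-1}` such that for every edge `ij` of `R`
there is an edge of `G` between `P i` and `P j`, and suppose that for every `i < t` there
are `k` pairwise independent edges of `G` joining `P i` to `k` distinct other parts.
Then `G` is `k`-connected. -/
theorem merge_many_k_connected {V : Type*} [Fintype V] (k t s : ℕ) (G : SimpleGraph V)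
    (P : Fin (t + s) → Set V)
    (hdisj : Pairwise (Function.onFun Disjoint P))
    (hcover : ∀ v : V, ∃ i : Fin (t + s), v ∈ P i)
    (hsingle : ∀ i : Fin (t + s), t ≤ (i : ℕ) → ∃ u : V, P i = {u})
    (hGi : ∀ i : Fin (t + s), (i : ℕ) < t →
      ∃ Hi : SimpleGraph (P i), Hi ≤ G.induce (P i) ∧ IsKConnected k Hi)
    (R : SimpleGraph (Fin (t + s))) (hR : IsKConnected k R)
    (hedge : ∀ i j : Fin (t + s), R.Adj i j → ∃ u ∈ P i, ∃ v ∈ P j, G.Adj u v)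
    (hmatch : ∀ i : Fin (t + s), (i : ℕ) < t →
      ∃ (a b : Fin k → V) (j : Fin k → Fin (t + s)),
        Function.Injective a ∧ Function.Injective b ∧ Function.Injective j ∧
        (∀ m, a m ∈ P i) ∧ (∀ m, j m ≠ i) ∧ (∀ m, b m ∈ P (j m)) ∧
        (∀ m, G.Adj (a m) (b m))) :
    IsKConnected k G := by
  -- unique part of a vertex
  have hpart : ∀ {v : V} {i i' : Fin (t + s)}, v ∈ P i → v ∈ P i' → i = i' := by
    intro v i i' hi hi'
    by_contra hne
    exact Set.disjoint_left.mp (hdisj hne) hi hi'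
  have hts : k < t + s := by
    have := hR.1
    simpa using this
  -- cardinality claim
  have hcard : k < Nat.card V := by
    rcases Nat.eq_zero_or_pos t with ht | ht
    · -- all parts singletons
      let g : Fin (t + s) → V := fun i => (hsingle i (by omega)).choose
      have hg : ∀ i, P i = {g i} := fun i => (hsingle i (by omega)).choose_spec
      have hginj : Function.Injective g := by
        intro i j hij
        apply hpart (i := i) (i' := j)
        · rw [hg i]; rfl
        · rw [hg j]; exact hij ▸ rfl
      have := Fintype.card_le_of_injective g hginj
      simp only [Fintype.card_fin] at this
      rw [Nat.card_eq_fintype_card]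
      omega
    · obtain ⟨Hi, _, hHi⟩ := hGi ⟨0, by omega⟩ ht
      have h1 := hHi.1
      rw [Nat.card_coe_set_eq] at h1
      have h2 : (P ⟨0, by omega⟩).ncard ≤ (Set.univ : Set V).ncard :=
        Set.ncard_le_ncard (Set.subset_univ _) Set.finite_univ
      rw [Set.ncard_univ] at h2
      omega
  refine ⟨hcard, fun S hS => ?_⟩
  rw [SimpleGraph.connected_iff]
  have hSne : ∃ w : V, w ∉ S := by
    by_contra h
    push_neg at h
    have : S = Set.univ := Set.eq_univ_of_forall h
    rw [this, Set.ncard_univ] at hS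
    omega
  constructor
  swap
  · obtain ⟨w, hw⟩ := hSne
    exact ⟨⟨w, hw⟩⟩
  -- the part-index function
  have f : ∀ v : V, {i : Fin (t + s) // v ∈ P i} := fun v => ⟨(hcover v).choose, (hcover v).choose_spec⟩
  set T : Set (Fin (t + s)) := {i | ∃ v ∈ S, v ∈ P i} with hTdef
  have hT : T.ncard < k := by
    have hsub : T ⊆ (fun v => (f v).1) '' S := by
      rintro i ⟨v, hvS, hvP⟩
      exact ⟨v, hvS, hpart (f v).2 hvP⟩
    calc T.ncard ≤ ((fun v => (f v).1) '' S).ncard :=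
          Set.ncard_le_ncard hsub (S.toFinite.image _)
      _ ≤ S.ncard := Set.ncard_image_le S.toFinite
      _ < k := hS
  have hsurv : ∀ {i : Fin (t + s)}, i ∉ T → ∀ {v : V}, v ∈ P i → v ∉ S := by
    intro i hi v hv hvS
    exact hi ⟨v, hvS, hv⟩
  have claimA : ∀ (i : Fin (t + s)) (u v : V), u ∈ P i → v ∈ P i →
      ∀ (hu' : u ∉ S) (hv' : v ∉ S), (G.induce Sᶜ).Reachable ⟨u, hu'⟩ ⟨v, hv'⟩ := by
    intro i u v hu hv hu' hv'
    rcases Nat.lt_or_ge (i : ℕ) t with hit | hit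
    · obtain ⟨Hi, hle, hHi⟩ := hGi i hit
      exact reach_in_part hS hle hHi hu hv hu' hv'
    · obtain ⟨u0, hu0⟩ := hsingle i hit
      rw [hu0] at hu hv
      have : u = v := by rw [hu, hv]
      subst this
      exact SimpleGraph.Reachable.refl _
  -- Claim B: reachability between parts outside T
  have claimB : ∀ (x y : ↥Tᶜ) (_ : (R.induce Tᶜ).Walk x y) (u v : V)
      (hu : u ∈ P x.1) (hv : v ∈ P y.1) (hu' : u ∉ S) (hv' : v ∉ S),
      (G.induce Sᶜ).Reachable ⟨u, hu'⟩ ⟨v, hv'⟩ := by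
    intro x y w
    induction w with
    | nil => intro u v hu hv hu' hv'; exact claimA _ u v hu hv hu' hv'
    | @cons x x' y hadj w ih =>
      intro u v hu hv hu' hv'
      obtain ⟨u', hu'P, v', hv'P, hGadj⟩ := hedge x.1 x'.1 hadj
      have hu'S : u' ∉ S := hsurv x.2 hu'P
      have hv'S : v' ∉ S := hsurv x'.2 hv'P
      have r1 : (G.induce Sᶜ).Reachable ⟨u, hu'⟩ ⟨u', hu'S⟩ := claimA _ u u' hu hu'P hu' hu'S
      have r2 : (G.induce Sᶜ).Reachable ⟨u', hu'S⟩ ⟨v', hv'S⟩ :=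
        SimpleGraph.Adj.reachable hGadj
      exact (r1.trans r2).trans (ih v' v hv'P hv hv'S hv')
  -- Claim C: every surviving vertex reaches a part outside T
  have claimC : ∀ (w : V) (hw : w ∉ S), ∃ (x : V) (hx : x ∉ S) (p : Fin (t + s)),
      p ∉ T ∧ x ∈ P p ∧ (G.induce Sᶜ).Reachable ⟨w, hw⟩ ⟨x, hx⟩ := by
    intro w hw
    by_cases hfw : (f w).1 ∈ T
    swap
    · exact ⟨w, hw, (f w).1, hfw, (f w).2, SimpleGraph.Reachable.refl _⟩
    have hwt : ((f w).1 : ℕ) < t := by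
      by_contra h
      push_neg at h
      obtain ⟨u0, hu0⟩ := hsingle (f w).1 h
      obtain ⟨v, hvS, hvP⟩ := hfw
      rw [hu0] at hvP
      have hwP := (f w).2
      rw [hu0] at hwP
      rw [Set.mem_singleton_iff] at hvP hwP
      exact hw (hwP ▸ hvP ▸ hvS)
    obtain ⟨a, b, j, hainj, hbinj, hjinj, haP, hjne, hbP, hab⟩ := hmatch (f w).1 hwt
    have hfind : ∃ m : Fin k, a m ∉ S ∧ b m ∉ S ∧ j m ∉ T := by
      by_contra h
      push_neg at h
      have hch : ∀ m : Fin k, ∃ v, v ∈ S ∧ (v = a m ∨ v = b m ∨ v ∈ P (j m)) := by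
        intro m
        rcases Classical.em (a m ∈ S) with h1 | h1
        · exact ⟨a m, h1, Or.inl rfl⟩
        rcases Classical.em (b m ∈ S) with h2 | h2
        · exact ⟨b m, h2, Or.inr (Or.inl rfl)⟩
        obtain ⟨v, hvS, hvP⟩ := h m h1 h2
        exact ⟨v, hvS, Or.inr (Or.inr hvP)⟩
      choose g hgS hgB using hch
      have hginj : Function.Injective g := by
        intro m m' he
        have hB := hgB m
        have hB' := hgB m'
        rw [he] at hB
        rcases hB with h1 | h1 | h1 <;> rcases hB' with h2 | h2 | h2
        · exact hainj (h1.symm.trans h2)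
        · exfalso
          have hx : a m ∈ P (j m') := by rw [← h1, h2]; exact hbP m'
          exact hjne m' (hpart hx (haP m))
        · exfalso
          have hx : a m ∈ P (j m') := by rw [← h1]; exact h2
          exact hjne m' (hpart hx (haP m))
        · exfalso
          have hx : a m' ∈ P (j m) := by rw [← h2, h1]; exact hbP m
          exact hjne m (hpart hx (haP m'))
        · exact hbinj (h1.symm.trans h2)
        · have hx : b m ∈ P (j m') := by rw [← h1]; exact h2
          exact hjinj (hpart (hbP m) hx)
        · exfalso
          have hx : a m' ∈ P (j m) := by rw [← h2]; exact h1
          exact hjne m (hpart hx (haP m'))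
        · have hx : b m' ∈ P (j m) := by rw [← h2]; exact h1
          exact hjinj (hpart hx (hbP m'))
        · exact hjinj (hpart h1 h2)
      haveI : Fintype ↥S := S.toFinite.fintype
      have hcard2 : Fintype.card (Fin k) ≤ Fintype.card ↥S :=
        Fintype.card_le_of_injective (fun m => ⟨g m, hgS m⟩)
          (fun m m' he => hginj (congrArg Subtype.val he))
      rw [Fintype.card_fin] at hcard2
      rw [← Nat.card_coe_set_eq, Nat.card_eq_fintype_card] at hS
      omega
    obtain ⟨m, haS, hbS, hjT⟩ := hfind
    have r1 : (G.induce Sᶜ).Reachable ⟨w, hw⟩ ⟨a m, haS⟩ :=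
      claimA (f w).1 w (a m) (f w).2 (haP m) hw haS
    have r2 : (G.induce Sᶜ).Reachable ⟨a m, haS⟩ ⟨b m, hbS⟩ :=
      SimpleGraph.Adj.reachable (hab m)
    exact ⟨b m, hbS, j m, hjT, hbP m, r1.trans r2⟩
  -- finish
  rintro ⟨w1, hw1⟩ ⟨w2, hw2⟩
  obtain ⟨x1, hx1, p1, hp1T, hx1P, r1⟩ := claimC w1 hw1
  obtain ⟨x2, hx2, p2, hp2T, hx2P, r2⟩ := claimC w2 hw2
  have hRT := (hR.2 T hT).preconnected
  obtain ⟨wk⟩ := hRT ⟨p1, hp1T⟩ ⟨p2, hp2T⟩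
  exact (r1.trans (claimB ⟨p1, hp1T⟩ ⟨p2, hp2T⟩ wk x1 x2 hx1P hx2P hx1 hx2)).trans r2.symm
end

section
/- Let G be a finite graph and let H₁ and H₂ be vertex-disjoint subgraphs of G, each bipartite and k-connected. If G contains at least 4k pairwise independent edges, each with one endpoint in V(H₁) and the other in V(H₂), then G contains a bipartite k-connected subgraph whose vertex set is V(H₁) ∪ V(H₂). -/
private lemma decide_eq_iff' {P : Prop} [Decidable P] {b : Bool} :
    decide P = b ↔ (P ↔ b = true) := by
  cases b <;> simp

/-- Let `G` be a finite graph and let `H₁` and `H₂` be vertex-disjoint subgraphs of `G`,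
each bipartite and `k`-connected.  If `G` contains at least `4k` pairwise independent
edges `a i — b i`, each with one endpoint in `V(H₁)` and the other in `V(H₂)`, then `G`
contains a bipartite `k`-connected subgraph whose vertex set is `V(H₁) ∪ V(H₂)`. -/
theorem merge_two_bipartite_k_connected {V : Type*} [Fintype V] (k : ℕ) (G : SimpleGraph V)
    (H₁ H₂ : G.Subgraph) (hdisj : Disjoint H₁.verts H₂.verts)
    (hb₁ : IsBipartite H₁.coe) (hc₁ : IsKConnected k H₁.coe)
    (hb₂ : IsBipartite H₂.coe) (hc₂ : IsKConnected k H₂.coe)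
    (a b : Fin (4 * k) → V)
    (hainj : Function.Injective a) (hbinj : Function.Injective b)
    (ha : ∀ i, a i ∈ H₁.verts) (hb : ∀ i, b i ∈ H₂.verts)
    (hadj : ∀ i, G.Adj (a i) (b i)) :
    ∃ H : G.Subgraph, H.verts = H₁.verts ∪ H₂.verts ∧
      IsBipartite H.coe ∧ IsKConnected k H.coe := by
  classical
  obtain ⟨A₁, hA₁⟩ := hb₁
  obtain ⟨A₂, hA₂⟩ := hb₂
  -- pigeonhole: choose ≥ k aligned edges
  set f : Fin (4 * k) → Bool × Bool := fun i =>
    (decide ((⟨a i, ha i⟩ : H₁.verts) ∈ A₁), decide ((⟨b i, hb i⟩ : H₂.verts) ∈ A₂)) with hf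
  obtain ⟨pq, -, hpq⟩ :
      ∃ pq ∈ (Finset.univ : Finset (Bool × Bool)),
        k ≤ (Finset.univ.filter (fun i => f i = pq)).card := by
    apply Finset.exists_le_card_fiber_of_mul_le_card_of_maps_to
    · intro x _; exact Finset.mem_univ _
    · exact Finset.univ_nonempty
    · simp [Finset.card_univ]
  set I : Finset (Fin (4 * k)) := Finset.univ.filter (fun i => f i = pq) with hIdef
  have hI1 : ∀ i ∈ I, ((⟨a i, ha i⟩ : H₁.verts) ∈ A₁ ↔ pq.1 = true) := by
    intro i hi
    have := (Finset.mem_filter.mp hi).2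
    have h1 : decide ((⟨a i, ha i⟩ : H₁.verts) ∈ A₁) = pq.1 := congrArg Prod.fst this
    exact decide_eq_iff'.mp h1
  have hI2 : ∀ i ∈ I, ((⟨b i, hb i⟩ : H₂.verts) ∈ A₂ ↔ pq.2 = true) := by
    intro i hi
    have := (Finset.mem_filter.mp hi).2
    have h1 : decide ((⟨b i, hb i⟩ : H₂.verts) ∈ A₂) = pq.2 := congrArg Prod.snd this
    exact decide_eq_iff'.mp h1
  -- the merged subgraph
  have hdisj' : ∀ {v : V}, v ∈ H₁.verts → v ∈ H₂.verts → False :=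
    fun h1 h2 => Set.disjoint_left.mp hdisj h1 h2
  let H : G.Subgraph :=
    { verts := H₁.verts ∪ H₂.verts
      Adj := fun u v => H₁.Adj u v ∨ H₂.Adj u v ∨
        ∃ i ∈ I, (u = a i ∧ v = b i) ∨ (u = b i ∧ v = a i)
      adj_sub := by
        rintro u v (h | h | ⟨i, hi, ⟨rfl, rfl⟩ | ⟨rfl, rfl⟩⟩)
        · exact H₁.adj_sub h
        · exact H₂.adj_sub h
        · exact hadj i
        · exact (hadj i).symm
      edge_vert := by
        rintro u v (h | h | ⟨i, hi, ⟨rfl, rfl⟩ | ⟨rfl, rfl⟩⟩)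
        · exact Or.inl (H₁.edge_vert h)
        · exact Or.inr (H₂.edge_vert h)
        · exact Or.inl (ha i)
        · exact Or.inr (hb i)
      symm := by
        constructor
        rintro u v (h | h | ⟨i, hi, ⟨rfl, rfl⟩ | ⟨rfl, rfl⟩⟩)
        · exact Or.inl h.symm
        · exact Or.inr (Or.inl h.symm)
        · exact Or.inr (Or.inr ⟨i, hi, Or.inr ⟨rfl, rfl⟩⟩)
        · exact Or.inr (Or.inr ⟨i, hi, Or.inl ⟨rfl, rfl⟩⟩) }
  have hHverts : H.verts = H₁.verts ∪ H₂.verts := rfl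
  refine ⟨H, rfl, ?_, ?_, ?_⟩
  · -- bipartite
    let A : Set ↥H.verts :=
      {v | (∃ h : v.1 ∈ H₁.verts, ((⟨v.1, h⟩ : H₁.verts) ∈ A₁ ↔ pq.1 = true)) ∨
           (∃ h : v.1 ∈ H₂.verts, ¬((⟨v.1, h⟩ : H₂.verts) ∈ A₂ ↔ pq.2 = true))}
    have memA_left : ∀ (v : V) (h : v ∈ H₁.verts) (hv : v ∈ H.verts),
        ((⟨v, hv⟩ : ↥H.verts) ∈ A ↔ (((⟨v, h⟩ : H₁.verts) ∈ A₁) ↔ pq.1 = true)) := by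
      intro v h hv
      constructor
      · rintro (⟨h', hh⟩ | ⟨h', hh⟩)
        · exact hh
        · exact absurd h' (fun h' => hdisj' h h')
      · intro hh; exact Or.inl ⟨h, hh⟩
    have memA_right : ∀ (v : V) (h : v ∈ H₂.verts) (hv : v ∈ H.verts),
        ((⟨v, hv⟩ : ↥H.verts) ∈ A ↔ ¬(((⟨v, h⟩ : H₂.verts) ∈ A₂) ↔ pq.2 = true)) := by
      intro v h hv
      constructor
      · rintro (⟨h', hh⟩ | ⟨h', hh⟩)
        · exact absurd h' (fun h' => hdisj' h' h)
        · exact hh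
      · intro hh; exact Or.inr ⟨h, hh⟩
    refine ⟨A, ?_⟩
    rintro ⟨u, hu⟩ ⟨v, hv⟩ huv
    rcases huv with h | h | ⟨i, hi, ⟨rfl, rfl⟩ | ⟨rfl, rfl⟩⟩
    · have hu1 := H₁.edge_vert h
      have hv1 := H₁.edge_vert h.symm
      have key := hA₁ (show H₁.coe.Adj ⟨u, hu1⟩ ⟨v, hv1⟩ from h)
      rw [memA_left u hu1 hu, memA_left v hv1 hv]
      tauto
    · have hu2 := H₂.edge_vert h
      have hv2 := H₂.edge_vert h.symm
      have key := hA₂ (show H₂.coe.Adj ⟨u, hu2⟩ ⟨v, hv2⟩ from h)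
      rw [memA_right u hu2 hu, memA_right v hv2 hv]
      tauto
    · rw [memA_left (a i) (ha i) hu, memA_right (b i) (hb i) hv]
      have h1 := hI1 i hi
      have h2 := hI2 i hi
      tauto
    · rw [memA_right (b i) (hb i) hu, memA_left (a i) (ha i) hv]
      have h1 := hI1 i hi
      have h2 := hI2 i hi
      tauto
  · -- k < Nat.card
    have hle : Nat.card ↥H₁.verts ≤ Nat.card ↥H.verts := by
      rw [Nat.card_coe_set_eq, Nat.card_coe_set_eq]
      exact Set.ncard_le_ncard Set.subset_union_left (Set.toFinite _)
    exact lt_of_lt_of_le hc₁.1 hle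
  · -- connectivity after deletion
    intro S hS
    have hk1 : 1 ≤ k := by omega
    -- projected deleted sets
    let S₁ : Set ↥H₁.verts :=
      {u | (⟨u.1, Set.mem_union_left _ u.2⟩ : ↥H.verts) ∈ S}
    let S₂ : Set ↥H₂.verts :=
      {u | (⟨u.1, Set.mem_union_right _ u.2⟩ : ↥H.verts) ∈ S}
    have hS₁ : S₁.ncard < k := by
      refine lt_of_le_of_lt ?_ hS
      refine Set.ncard_le_ncard_of_injOn
        (fun u => (⟨u.1, Set.mem_union_left _ u.2⟩ : ↥H.verts)) (fun u hu => hu) ?_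
        (Set.toFinite _)
      intro x hx y hy hxy
      simp only [Subtype.mk.injEq] at hxy
      exact Subtype.ext hxy
    have hS₂ : S₂.ncard < k := by
      refine lt_of_le_of_lt ?_ hS
      refine Set.ncard_le_ncard_of_injOn
        (fun u => (⟨u.1, Set.mem_union_right _ u.2⟩ : ↥H.verts)) (fun u hu => hu) ?_
        (Set.toFinite _)
      intro x hx y hy hxy
      simp only [Subtype.mk.injEq] at hxy
      exact Subtype.ext hxy
    have hC₁ := hc₁.2 S₁ hS₁
    have hC₂ := hc₂.2 S₂ hS₂
    -- a surviving connecting edge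
    obtain ⟨i₀, hi₀, hna, hnb⟩ :
        ∃ i ∈ I, (∀ s ∈ S, (s : ↥H.verts).1 ≠ a i) ∧ (∀ s ∈ S, (s : ↥H.verts).1 ≠ b i) := by
      by_contra hcon
      push_neg at hcon
      have hw : ∀ i ∈ I, ∃ s ∈ S, s.1 = a i ∨ s.1 = b i := by
        intro i hi
        by_cases hP : ∀ s ∈ S, (s : ↥H.verts).1 ≠ a i
        · obtain ⟨s, hs, he⟩ := hcon i hi hP
          exact ⟨s, hs, Or.inr he⟩
        · push_neg at hP
          obtain ⟨s, hs, he⟩ := hP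
          exact ⟨s, hs, Or.inl he⟩
      choose g hg1 hg2 using hw
      haveI : Nonempty ↥H.verts :=
        ⟨⟨a ⟨0, by omega⟩, Set.mem_union_left _ (ha _)⟩⟩
      have hcard : I.card ≤ S.toFinite.toFinset.card := by
        refine Finset.card_le_card_of_injOn (fun i => if h : i ∈ I then g i h else Classical.arbitrary _) ?_ ?_
        · intro i hi
          simp only [Finset.mem_coe] at hi ⊢
          simp only [dif_pos hi, Set.Finite.mem_toFinset]
          exact hg1 i hi
        · intro i hi j hj hij
          simp only [Finset.mem_coe] at hi hj
          simp only [dif_pos hi, dif_pos hj] at hij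
          have hval : (g i hi).1 = (g j hj).1 := congrArg Subtype.val hij
          rcases hg2 i hi with h1 | h1 <;> rcases hg2 j hj with h2 | h2 <;>
            rw [h1, h2] at hval
          · exact hainj hval
          · exact absurd (hval ▸ ha i) (fun h => hdisj' h (hb j))
          · exact absurd (hval ▸ hb i) (fun h => hdisj' (ha j) h)
          · exact hbinj hval
      have : k ≤ S.ncard := by
        rw [← Set.ncard_eq_toFinset_card S S.toFinite] at hcard
        omega
      omega
    have hnonemptyI : Nonempty (Fin (4 * k)) := ⟨i₀⟩
    -- key surviving vertices
    have haS : (⟨a i₀, Set.mem_union_left _ (ha i₀)⟩ : ↥H.verts) ∉ S := by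
      intro hmem
      exact hna _ hmem rfl
    have hbS : (⟨b i₀, Set.mem_union_right _ (hb i₀)⟩ : ↥H.verts) ∉ S := by
      intro hmem
      exact hnb _ hmem rfl
    let xA : ↥(Sᶜ : Set ↥H.verts) := ⟨⟨a i₀, Set.mem_union_left _ (ha i₀)⟩, haS⟩
    let xB : ↥(Sᶜ : Set ↥H.verts) := ⟨⟨b i₀, Set.mem_union_right _ (hb i₀)⟩, hbS⟩
    -- homomorphisms
    let φ₁ : (H₁.coe.induce S₁ᶜ) →g (H.coe.induce Sᶜ) :=
      { toFun := fun y => ⟨⟨y.1.1, Set.mem_union_left _ y.1.2⟩, y.2⟩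
        map_rel' := fun {y z} hyz => Or.inl hyz }
    let φ₂ : (H₂.coe.induce S₂ᶜ) →g (H.coe.induce Sᶜ) :=
      { toFun := fun y => ⟨⟨y.1.1, Set.mem_union_right _ y.1.2⟩, y.2⟩
        map_rel' := fun {y z} hyz => Or.inr (Or.inl hyz) }
    have reachA : ∀ x : ↥(Sᶜ : Set ↥H.verts), x.1.1 ∈ H₁.verts →
        (H.coe.induce Sᶜ).Reachable x xA := by
      intro x hx1
      have hxS₁ : (⟨x.1.1, hx1⟩ : ↥H₁.verts) ∈ S₁ᶜ := by
        intro hmem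
        apply x.2
        have heq : (⟨x.1.1, Set.mem_union_left _ hx1⟩ : ↥H.verts) = x.1 := Subtype.ext rfl
        have hmem' : (⟨x.1.1, Set.mem_union_left _ hx1⟩ : ↥H.verts) ∈ S := hmem
        rwa [heq] at hmem'
      have haS₁ : (⟨a i₀, ha i₀⟩ : ↥H₁.verts) ∈ S₁ᶜ := fun hmem => haS hmem
      have hreach := hC₁.preconnected ⟨⟨x.1.1, hx1⟩, hxS₁⟩ ⟨⟨a i₀, ha i₀⟩, haS₁⟩
      have h := hreach.map φ₁
      have e1 : φ₁ ⟨⟨x.1.1, hx1⟩, hxS₁⟩ = x := Subtype.ext (Subtype.ext rfl)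
      have e2 : φ₁ ⟨⟨a i₀, ha i₀⟩, haS₁⟩ = xA := Subtype.ext (Subtype.ext rfl)
      rwa [e1, e2] at h
    have reachB : ∀ x : ↥(Sᶜ : Set ↥H.verts), x.1.1 ∈ H₂.verts →
        (H.coe.induce Sᶜ).Reachable x xB := by
      intro x hx2
      have hxS₂ : (⟨x.1.1, hx2⟩ : ↥H₂.verts) ∈ S₂ᶜ := by
        intro hmem
        apply x.2
        have heq : (⟨x.1.1, Set.mem_union_right _ hx2⟩ : ↥H.verts) = x.1 := Subtype.ext rfl
        have hmem' : (⟨x.1.1, Set.mem_union_right _ hx2⟩ : ↥H.verts) ∈ S := hmem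
        rwa [heq] at hmem'
      have hbS₂ : (⟨b i₀, hb i₀⟩ : ↥H₂.verts) ∈ S₂ᶜ := fun hmem => hbS hmem
      have hreach := hC₂.preconnected ⟨⟨x.1.1, hx2⟩, hxS₂⟩ ⟨⟨b i₀, hb i₀⟩, hbS₂⟩
      have h := hreach.map φ₂
      have e1 : φ₂ ⟨⟨x.1.1, hx2⟩, hxS₂⟩ = x := Subtype.ext (Subtype.ext rfl)
      have e2 : φ₂ ⟨⟨b i₀, hb i₀⟩, hbS₂⟩ = xB := Subtype.ext (Subtype.ext rfl)
      rwa [e1, e2] at h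
    have adjBA : (H.coe.induce Sᶜ).Adj xB xA :=
      Or.inr (Or.inr ⟨i₀, hi₀, Or.inr ⟨rfl, rfl⟩⟩)
    have reachToA : ∀ x : ↥(Sᶜ : Set ↥H.verts), (H.coe.induce Sᶜ).Reachable x xA := by
      intro x
      rcases x.1.2 with hx | hx
      · exact reachA x hx
      · exact (reachB x hx).trans adjBA.reachable
    haveI : Nonempty ↥(Sᶜ : Set ↥H.verts) := ⟨xA⟩
    exact ⟨fun x y => (reachToA x).trans (reachToA y).symm⟩
end

section
/- Let G be a finite graph, let H be a bipartite k-connected subgraph of G, and let v be a vertex of G not in V(H). If there are at least 2k edges of G between v and V(H), then G contains a bipartite k-connected subgraph whose vertex set is V(H) ∪ {v}. -/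
/-- Let `G` be a finite graph, let `H` be a bipartite `k`-connected subgraph of `G`,
and let `v` be a vertex of `G` not in `V(H)`.  If there are at least `2k` edges of `G`
between `v` and `V(H)`, then `G` contains a bipartite `k`-connected subgraph whose
vertex set is `V(H) ∪ {v}`. -/
theorem absorb_vertex_bipartite_k_connected {V : Type*} [Fintype V] (k : ℕ)
    (G : SimpleGraph V) (H : G.Subgraph)
    (hb : IsBipartite H.coe) (hc : IsKConnected k H.coe)
    (v : V) (hv : v ∉ H.verts)
    (hdeg : 2 * k ≤ {w : V | w ∈ H.verts ∧ G.Adj v w}.ncard) :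
    ∃ H' : G.Subgraph, H'.verts = insert v H.verts ∧
      IsBipartite H'.coe ∧ IsKConnected k H'.coe := by
  classical
  set N : Set V := {w : V | w ∈ H.verts ∧ G.Adj v w} with hNdef
  -- Extract a side `C` of the bipartition (as a set of `V`) containing at least
  -- `k` neighbors of `v`, and let `B` be those neighbors.
  obtain ⟨C, hCbip, B, hBN, hBC, hBcard⟩ :
      ∃ C : Set V, (∀ ⦃x y : V⦄, x ∈ H.verts → y ∈ H.verts → H.Adj x y → (x ∈ C ↔ y ∉ C)) ∧
        ∃ B : Set V, B ⊆ N ∧ B ⊆ C ∧ k ≤ B.ncard := by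
    obtain ⟨A, hA⟩ := hb
    set C : Set V := {x : V | ∃ h : x ∈ H.verts, (⟨x, h⟩ : H.verts) ∈ A} with hCdef
    have hCbip : ∀ ⦃x y : V⦄, x ∈ H.verts → y ∈ H.verts → H.Adj x y → (x ∈ C ↔ y ∉ C) := by
      intro x y hx hy hxy
      have := hA (u := ⟨x, hx⟩) (v := ⟨y, hy⟩) hxy
      constructor
      · rintro ⟨h, hxA⟩ ⟨h', hyA⟩
        exact (this.mp hxA) hyA
      · intro hyC
        exact ⟨hx, this.mpr fun hyA => hyC ⟨hy, hyA⟩⟩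
    have hsum : (N ∩ C).ncard + (N \ C).ncard = N.ncard :=
      Set.ncard_inter_add_ncard_diff_eq_ncard N C (Set.toFinite N)
    by_cases hk : k ≤ (N ∩ C).ncard
    · exact ⟨C, hCbip, N ∩ C, Set.inter_subset_left, Set.inter_subset_right, hk⟩
    · refine ⟨Cᶜ, fun x y hx hy hxy => ?_, N \ C, Set.diff_subset, fun x hx => hx.2, ?_⟩
      · have := hCbip hx hy hxy
        simp only [Set.mem_compl_iff, not_not]
        tauto
      · push_neg at hk
        omega
  have hBverts : B ⊆ H.verts := fun x hx => (hBN hx).1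
  have hBne_v : ∀ b ∈ B, b ≠ v := fun b hb hbv => hv (hbv ▸ hBverts hb)
  -- the new subgraph
  let H' : G.Subgraph :=
    { verts := insert v H.verts
      Adj := fun x y => H.Adj x y ∨ (x = v ∧ y ∈ B) ∨ (y = v ∧ x ∈ B)
      adj_sub := by
        rintro x y (h | ⟨rfl, hy⟩ | ⟨rfl, hx⟩)
        · exact H.adj_sub h
        · exact (hBN hy).2
        · exact ((hBN hx).2).symm
      edge_vert := by
        rintro x y (h | ⟨rfl, hy⟩ | ⟨rfl, hx⟩)
        · exact Set.mem_insert_of_mem _ (H.edge_vert h)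
        · exact Set.mem_insert _ _
        · exact Set.mem_insert_of_mem _ (hBverts hx)
      symm := by
        refine ⟨?_⟩; rintro x y (h | ⟨rfl, hy⟩ | ⟨rfl, hx⟩)
        · exact Or.inl h.symm
        · exact Or.inr (Or.inr ⟨rfl, hy⟩)
        · exact Or.inr (Or.inl ⟨rfl, hx⟩) }
  have hadj : ∀ x y : V, H'.Adj x y ↔
      (H.Adj x y ∨ (x = v ∧ y ∈ B) ∨ (y = v ∧ x ∈ B)) := fun _ _ => Iff.rfl
  have hverts : H'.verts = insert v H.verts := rfl
  refine ⟨H', rfl, ?_, ?_⟩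
  -- bipartiteness
  · refine ⟨{u : ↥H'.verts | (u : V) ≠ v ∧ (u : V) ∈ C}, ?_⟩
    intro u w huw
    have huw' : H.Adj u w ∨ ((u : V) = v ∧ (w : V) ∈ B) ∨ ((w : V) = v ∧ (u : V) ∈ B) :=
      (hadj u w).mp huw
    rcases huw' with h | ⟨huv, hw⟩ | ⟨hwv, hu⟩
    · have hu' : (u : V) ∈ H.verts := H.edge_vert h
      have hw' : (w : V) ∈ H.verts := H.edge_vert h.symm
      have hunv : (u : V) ≠ v := fun e => hv (e ▸ hu')
      have hwnv : (w : V) ≠ v := fun e => hv (e ▸ hw')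
      have := hCbip hu' hw' h
      simp only [Set.mem_setOf_eq, hunv, hwnv, ne_eq, not_false_eq_true, true_and]
      tauto
    · have hw' : (w : V) ∈ C := hBC hw
      have hwnv : (w : V) ≠ v := hBne_v _ hw
      simp only [Set.mem_setOf_eq, huv, hwnv, ne_eq, not_true_eq_false, false_and,
        not_false_eq_true, true_and, false_iff, not_not]
      tauto
    · have hu' : (u : V) ∈ C := hBC hu
      have hunv : (u : V) ≠ v := hBne_v _ hu
      simp only [Set.mem_setOf_eq, hwv, hunv, ne_eq, not_true_eq_false, false_and,
        not_false_eq_true, true_and, true_iff]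
      tauto
  -- k-connectedness
  · constructor
    · have h1 : Nat.card ↥H'.verts = (insert v H.verts).ncard := by
        rw [hverts]; exact Nat.card_coe_set_eq _
      have h2 : (insert v H.verts).ncard = H.verts.ncard + 1 :=
        Set.ncard_insert_of_notMem hv (Set.toFinite _)
      have h3 : k < Nat.card ↥H.verts := hc.1
      rw [Nat.card_coe_set_eq] at h3
      omega
    · intro S hS
      -- the natural inclusion of vertex types
      have hmem : ∀ u : ↥H.verts, (u : V) ∈ H'.verts :=
        fun u => Set.mem_insert_of_mem _ u.2
      set ι : ↥H.verts → ↥H'.verts := fun u => ⟨u.1, hmem u⟩ with hιdef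
      have hι_inj : Function.Injective ι := by
        intro a b hab
        apply Subtype.ext
        have := congrArg Subtype.val hab
        exact this
      set S' : Set ↥H.verts := ι ⁻¹' S with hS'def
      have hS'card : S'.ncard ≤ S.ncard := by
        calc S'.ncard = (ι '' S').ncard := (Set.ncard_image_of_injective _ hι_inj).symm
        _ ≤ S.ncard := Set.ncard_le_ncard (Set.image_preimage_subset _ _) (Set.toFinite _)
      have hconn : ((H.coe).induce S'ᶜ).Connected := hc.2 S' (lt_of_le_of_lt hS'card hS)
      -- find a vertex of B avoiding S
      have hSval : (Subtype.val '' S).ncard = S.ncard :=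
        Set.ncard_image_of_injective _ Subtype.val_injective
      obtain ⟨b, hbB, hbS⟩ : ∃ b ∈ B, b ∉ Subtype.val '' S := by
        by_contra hcon
        push_neg at hcon
        have := Set.ncard_le_ncard hcon (Set.toFinite _)
        omega
      have hbH : b ∈ H.verts := hBverts hbB
      have hbnotS : ∀ x : ↥H'.verts, (x : V) ∉ Subtype.val '' S → x ∉ S :=
        fun x hx hmem' => hx ⟨x, hmem', rfl⟩
      set b₀ : ↥(Sᶜ) := ⟨ι ⟨b, hbH⟩, hbnotS _ hbS⟩ with hb₀def
      -- graph homomorphism from the induced graph on `H.coe` to that on `H'.coe`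
      let f : ((H.coe).induce S'ᶜ) →g ((H'.coe).induce Sᶜ) :=
        { toFun := fun x => ⟨ι x.1, x.2⟩
          map_rel' := by
            rintro ⟨x, hx⟩ ⟨y, hy⟩ hxy
            exact Or.inl hxy }
      -- every vertex is reachable from b₀
      have key : ∀ x : ↥(Sᶜ), ((H'.coe).induce Sᶜ).Reachable x b₀ := by
        intro x
        by_cases hxv : ((x : ↥H'.verts) : V) = v
        · -- x is the new vertex v; it is adjacent to b₀
          have hadj' : ((H'.coe).induce Sᶜ).Adj x b₀ := by
            show H'.Adj ((x : ↥H'.verts) : V) b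
            exact Or.inr (Or.inl ⟨hxv, hbB⟩)
          exact hadj'.reachable
        · -- x is an old vertex; use connectivity of H
          have hxH : ((x : ↥H'.verts) : V) ∈ H.verts := by
            rcases (x : ↥H'.verts).2 with h | h
            · exact absurd h hxv
            · exact h
          have hxS' : (⟨((x : ↥H'.verts) : V), hxH⟩ : ↥H.verts) ∈ S'ᶜ := by
            intro hmem'
            have h' : ι ⟨((x : ↥H'.verts) : V), hxH⟩ ∈ S := hmem'
            have e : ι ⟨((x : ↥H'.verts) : V), hxH⟩ = (x : ↥H'.verts) := Subtype.ext rfl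
            exact x.2 (e ▸ h')
          have hbS' : (⟨b, hbH⟩ : ↥H.verts) ∈ S'ᶜ := fun hmem' => hbnotS _ hbS hmem'
          have hreach := hconn.preconnected ⟨⟨((x : ↥H'.verts) : V), hxH⟩, hxS'⟩ ⟨⟨b, hbH⟩, hbS'⟩
          have := hreach.map f
          have e1 : f ⟨⟨((x : ↥H'.verts) : V), hxH⟩, hxS'⟩ = x :=
            Subtype.ext (Subtype.ext rfl)
          have e2 : f ⟨⟨b, hbH⟩, hbS'⟩ = b₀ := Subtype.ext (Subtype.ext rfl)
          rwa [e1, e2] at this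
      have hne : Nonempty ↥(Sᶜ) := ⟨b₀⟩
      exact { preconnected := fun x y => (key x).trans (key y).symm, nonempty := hne }
end

section
/- Let G be a finite graph that is c-connected, and let X ⊆ V(G) be a vertex subset with |X| ≥ m and |V(G) \ X| ≥ m, where m ≤ c. Then G contains a set of m pairwise independent edges, each with one endpoint in X and the other endpoint in V(G) \ X. -/
private lemma walk_pred {W : Type*} {H : SimpleGraph W} {P : W → Prop}
    (hP : ∀ u v, H.Adj u v → P u → P v) {u v : W} (p : H.Walk u v) (hu : P u) : P v := by
  induction p with
  | nil => exact hu
  | cons h _ ih => exact ih (hP _ _ h hu)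

private lemma crossing_cut_bound {V : Type*} [Fintype V] {c m : ℕ} {G : SimpleGraph V}
    (hconn : ∀ S : Set V, S.ncard < c → (G.induce Sᶜ).Connected)
    {X : Set V} (hm : m ≤ c) (hXc : m ≤ (Xᶜ : Set V).ncard)
    {A : Set V} (hA : A ⊆ X) (hAne : A.Nonempty) :
    m ≤ (X \ A).ncard + {y | y ∈ Xᶜ ∧ ∃ x ∈ A, G.Adj x y}.ncard := by
  set NA := {y | y ∈ Xᶜ ∧ ∃ x ∈ A, G.Adj x y} with hNAdef
  by_cases hfull : Xᶜ ⊆ NA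
  · have h1 : (Xᶜ : Set V).ncard ≤ NA.ncard := Set.ncard_le_ncard hfull (Set.toFinite _)
    omega
  · obtain ⟨y0, hy0c, hy0⟩ := Set.not_subset.mp hfull
    obtain ⟨x0, hx0⟩ := hAne
    set S := (X \ A) ∪ NA with hSdef
    by_contra hlt
    push_neg at hlt
    have hS : S.ncard < c := by
      have h2 := Set.ncard_union_le (X \ A) NA
      rw [← hSdef] at h2
      omega
    have hC := hconn S hS
    have hx0S : x0 ∈ Sᶜ := by
      intro h
      rcases h with h | h
      · exact h.2 hx0
      · exact h.1 (hA hx0)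
    have hy0S : y0 ∈ Sᶜ := by
      intro h
      rcases h with h | h
      · exact hy0c h.1
      · exact hy0 h
    have hreach := hC.preconnected ⟨x0, hx0S⟩ ⟨y0, hy0S⟩
    obtain ⟨p⟩ := hreach
    have := walk_pred (H := G.induce Sᶜ) (P := fun u => (u : V) ∈ X)
      (by
        rintro ⟨u, hu⟩ ⟨v, hv⟩ hadj huX
        have hadj' : G.Adj u v := hadj
        by_contra hvX
        have huA : u ∈ A := by
          by_contra huA
          exact hu (Or.inl ⟨huX, huA⟩)
        exact hv (Or.inr ⟨hvX, u, huA, hadj'⟩)) p (hA hx0)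
    exact hy0c this

/-- Let `G` be a finite graph that is `c`-connected, and let `X ⊆ V(G)` be a vertex
subset with `|X| ≥ m` and `|V(G) \ X| ≥ m`, where `m ≤ c`.  Then `G` contains a set of
`m` pairwise independent edges `a i — b i`, each with one endpoint in `X` and the other
endpoint in `V(G) \ X`. -/
theorem matching_across_cut {V : Type*} [Fintype V] (c m : ℕ) (G : SimpleGraph V)
    (hconn : IsKConnected c G) (X : Set V)
    (hm : m ≤ c) (hX : m ≤ X.ncard) (hXc : m ≤ (Xᶜ : Set V).ncard) :
    ∃ a b : Fin m → V, Function.Injective a ∧ Function.Injective b ∧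
      (∀ i, a i ∈ X) ∧ (∀ i, b i ∈ Xᶜ) ∧ ∀ i, G.Adj (a i) (b i) := by
  classical
  obtain ⟨-, hconn⟩ := hconn
  set k := X.ncard - m with hk
  -- crossing neighbors as a Finset
  set nbr : V → Finset V := fun x => Finset.univ.filter (fun y => y ∈ Xᶜ ∧ G.Adj x y) with hnbr
  set t : X → Finset (V ⊕ Fin k) := fun x =>
    ((nbr x.val).image Sum.inl) ∪ ((Finset.univ : Finset (Fin k)).image Sum.inr) with ht
  have hall : ∀ s : Finset X, s.card ≤ (s.biUnion t).card := by
    intro s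
    rcases s.eq_empty_or_nonempty with rfl | hsne
    · simp
    -- A : the underlying set of s
    set A : Set V := (↑(s.image (Subtype.val)) : Set V) with hAdef
    have hAsub : A ⊆ X := by
      intro x hx
      simp only [hAdef, Finset.coe_image, Set.mem_image, Finset.mem_coe] at hx
      obtain ⟨⟨x', hx'⟩, -, rfl⟩ := hx
      exact hx'
    have hAne : A.Nonempty := by
      obtain ⟨x, hx⟩ := hsne
      exact ⟨x.val, Finset.mem_coe.mpr (Finset.mem_image.mpr ⟨x, hx, rfl⟩)⟩
    have key := crossing_cut_bound hconn hm hXc hAsub hAne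
    set NA := {y | y ∈ Xᶜ ∧ ∃ x ∈ A, G.Adj x y} with hNAdef
    -- cardinality bookkeeping
    have hAcard : A.ncard = s.card := by
      rw [hAdef, Set.ncard_coe_finset, Finset.card_image_of_injective _ Subtype.val_injective]
    have hXA : (X \ A).ncard = X.ncard - s.card := by
      rw [Set.ncard_diff hAsub, hAcard]
    have hsX : s.card ≤ X.ncard := by
      rw [← hAcard]
      exact Set.ncard_le_ncard hAsub (Set.toFinite _)
    -- the biUnion
    have hbi : s.biUnion t =
        ((s.biUnion (fun x => nbr x.val)).image Sum.inl) ∪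
        ((Finset.univ : Finset (Fin k)).image Sum.inr) := by
      ext z
      simp only [ht, Finset.mem_biUnion, Finset.mem_union, Finset.mem_image]
      constructor
      · rintro ⟨x, hx, h | h⟩
        · exact Or.inl (by obtain ⟨y, hy, rfl⟩ := h; exact ⟨y, ⟨x, hx, hy⟩, rfl⟩)
        · exact Or.inr h
      · rintro (⟨y, ⟨x, hx, hy⟩, rfl⟩ | h)
        · exact ⟨x, hx, Or.inl ⟨y, hy, rfl⟩⟩
        · obtain ⟨x, hx⟩ := hsne
          exact ⟨x, hx, Or.inr h⟩
    have hNAcard : (s.biUnion (fun x => nbr x.val)).card = NA.ncard := by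
      rw [← Set.ncard_coe_finset]
      congr 1
      ext y
      simp only [Finset.coe_biUnion, Set.mem_iUnion, Finset.mem_coe, hnbr,
        Finset.mem_filter, Finset.mem_univ, true_and, hNAdef, Set.mem_setOf_eq]
      constructor
      · rintro ⟨x, hx, hyc, hadj⟩
        exact ⟨hyc, x.val, Finset.mem_coe.mpr (Finset.mem_image.mpr ⟨x, hx, rfl⟩), hadj⟩
      · rintro ⟨hyc, x, hxA, hadj⟩
        simp only [hAdef, Finset.coe_image, Set.mem_image, Finset.mem_coe] at hxA
        obtain ⟨x', hx', rfl⟩ := hxA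
        exact ⟨x', hx', hyc, hadj⟩
    have hcard : (s.biUnion t).card = NA.ncard + k := by
      rw [hbi, Finset.card_union_of_disjoint, Finset.card_image_of_injective _ Sum.inl_injective,
        Finset.card_image_of_injective _ Sum.inr_injective, hNAcard, Finset.card_univ,
        Fintype.card_fin]
      · simp [Finset.disjoint_left]
    rw [hcard]
    omega
  obtain ⟨f, hfinj, hft⟩ := (Finset.all_card_le_biUnion_card_iff_exists_injective t).mp hall
  -- the set of x mapping to the left
  set B : Finset X := Finset.univ.filter (fun x => (f x).isLeft) with hB
  have hBc : (Finset.univ.filter (fun x : X => ¬ (f x).isLeft)).card ≤ k := by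
    have h := Finset.card_le_card_of_injOn
      (s := Finset.univ.filter (fun x : X => ¬ (f x).isLeft))
      (t := (Finset.univ : Finset (Fin k)).image Sum.inr) f
      (fun x hx => by
        have hx' := (Finset.mem_filter.mp hx).2
        rcases hfx : f x with y | j
        · rw [hfx] at hx'; simp at hx'
        · exact Finset.mem_image.mpr ⟨j, Finset.mem_univ _, rfl⟩)
      (fun x _ y _ h => hfinj h)
    rwa [Finset.card_image_of_injective _ Sum.inr_injective, Finset.card_univ,
      Fintype.card_fin] at h
  have hcardX : Fintype.card X = X.ncard := by
    rw [← Nat.card_coe_set_eq, Nat.card_eq_fintype_card]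
  have hmB : m ≤ B.card := by
    have h2 := Finset.card_filter_add_card_filter_not
      (s := (Finset.univ : Finset X)) (p := fun x : X => (f x).isLeft = true)
    rw [Finset.card_univ, hcardX, ← hB] at h2
    omega
  set g : Fin m → B := fun i => B.equivFin.symm (Fin.castLE hmB i) with hgdef
  have hginj : Function.Injective g := fun i j hij => by
    have := B.equivFin.symm.injective hij
    exact Fin.castLE_injective hmB this
  have hleft : ∀ i, ∃ y, f ((g i : X)) = Sum.inl y ∧ y ∈ nbr (((g i : X)) : V) := by
    intro i
    have hmem : ((g i : X)) ∈ B := (g i).2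
    have hl : (f ((g i : X))).isLeft := (Finset.mem_filter.mp hmem).2
    have hmt := hft ((g i : X))
    rcases hfx : f ((g i : X)) with y | j
    · refine ⟨y, rfl, ?_⟩
      rw [hfx] at hmt
      rcases Finset.mem_union.mp hmt with h | h
      · obtain ⟨y', hy', he⟩ := Finset.mem_image.mp h
        cases he
        exact hy'
      · obtain ⟨j, -, he⟩ := Finset.mem_image.mp h
        cases he
    · rw [hfx] at hl
      simp at hl
  choose b hb1 hb2 using hleft
  refine ⟨fun i => (((g i : X)) : V), b, ?_, ?_, ?_, ?_, ?_⟩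
  · intro i j hij
    exact hginj (Subtype.ext (Subtype.ext hij))
  · intro i j hij
    apply hginj
    apply Subtype.ext
    apply hfinj
    rw [hb1 i, hb1 j, hij]
  · exact fun i => ((g i : X)).2
  · intro i
    have h := Finset.mem_filter.mp (hb2 i)
    exact h.2.1
  · intro i
    have h := Finset.mem_filter.mp (hb2 i)
    exact h.2.2
end
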